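/- arXiv:1906.03904 — 6 statements merged into one kernel-verified Lean document; each statement's English description precedes it below -/
import Mathlib

section
/- Let A be a type, R and E binary relations on A, and S a binary relation with R ⊆ S ⊆ ERE. If S is terminating, then S is confluent modulo E if and only if S is both JK-confluent modulo E and JK-coherent modulo E. -/
/-- Reflexive-transitive closure of a relation. -/
def RStar {A : Type*} (T : A → A → Prop) : A → A → Prop :=
  Relation.ReflTransGen T

/-- `S` is confluent modulo `E`. -/
def ConfluentModulo {A : Type*} (S E : A → A → Prop) : Prop :=
  ∀ u v u' v', Relation.EqvGen E u v → RStar S u u' → RStar S v v' →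
    ∃ w w', RStar S u' w ∧ RStar S v' w' ∧ Relation.EqvGen E w w'

/-- Jouannaud–Kirchner confluence of `S` modulo `E`. -/
def JKConfluentModulo {A : Type*} (S E : A → A → Prop) : Prop :=
  ∀ u u' v', RStar S u u' → RStar S u v' →
    ∃ w w', RStar S u' w ∧ RStar S v' w' ∧ Relation.EqvGen E w w'

/-- Jouannaud–Kirchner coherence of `S` modulo `E`. -/
def JKCoherentModulo {A : Type*} (S E : A → A → Prop) : Prop :=
  ∀ u u' v, RStar S u u' → Relation.EqvGen E u v →
    ∃ w w', RStar S u' w ∧ RStar S v w' ∧ Relation.EqvGen E w w'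

namespace JKAux

variable {A : Type*} {S E : A → A → Prop}

/-- `x` and `y` are joinable modulo `E`. -/
def Joins (S E : A → A → Prop) (x y : A) : Prop :=
  ∃ w w', RStar S x w ∧ RStar S y w' ∧ Relation.EqvGen E w w'

lemma Joins.symm {x y : A} (h : Joins S E x y) : Joins S E y x := by
  obtain ⟨w, w', h1, h2, h3⟩ := h
  exact ⟨w', w, h2, h1, Relation.EqvGen.symm _ _ h3⟩

/-- Semi-confluence: a direct consequence of coherence. -/
lemma semi (hcoh : JKCoherentModulo S E) {p q r : A}
    (hpq : Relation.EqvGen E p q) (hqr : RStar S q r) : Joins S E p r := by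
  obtain ⟨w, w', h1, h2, h3⟩ := hcoh q r p hqr (Relation.EqvGen.symm _ _ hpq)
  exact ⟨w', w, h2, h1, Relation.EqvGen.symm _ _ h3⟩

lemma wf_of_no_chain (hterm : ¬ ∃ f : ℕ → A, ∀ n, S (f n) (f (n + 1))) :
    WellFounded (fun a b => S b a) := by
  set r : A → A → Prop := fun a b => S b a with hr
  constructor
  intro a
  by_contra ha
  apply hterm
  have key : ∀ x : {a // ¬ Acc r a}, ∃ y : {a // ¬ Acc r a}, S x.1 y.1 := by
    rintro ⟨x, hx⟩
    obtain ⟨b, hb1, hb2⟩ := exists_not_acc_lt_of_not_acc hx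
    exact ⟨⟨b, hb1⟩, hb2⟩
  choose f hf using key
  refine ⟨fun n => (f^[n] ⟨a, ha⟩).1, fun n => ?_⟩
  show S (f^[n] ⟨a, ha⟩).1 (f^[n+1] ⟨a, ha⟩).1
  rw [Function.iterate_succ']
  exact hf _

/-- Transitivity of joinability modulo `E`, by well-founded induction on the middle point. -/
lemma joins_trans (hconf : JKConfluentModulo S E) (hcoh : JKCoherentModulo S E)
    (hwf : WellFounded (fun a b => Relation.TransGen S b a)) :
    ∀ y x z, Joins S E x y → Joins S E y z → Joins S E x z := by
  intro y
  induction y using hwf.induction with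
  | _ y IH =>
    rintro x z ⟨w, w', hxw, hyw', hww'⟩ ⟨t, t', hyt, hzt', htt'⟩
    rcases Relation.ReflTransGen.cases_head hyw' with rfl | ⟨y₁, hy1, hy1w'⟩
    · -- w' = y
      rcases Relation.ReflTransGen.cases_head hyt with rfl | ⟨y₂, hy2, hy2t⟩
      · -- t = y : direct
        exact ⟨w, t', hxw, hzt', Relation.EqvGen.trans _ _ _ hww' htt'⟩
      · -- case C : y →⁺ t
        have hyt' : Relation.TransGen S y t := Relation.TransGen.head' hy2 hy2t
        obtain ⟨c, c', hwc, htc', hcc'⟩ := semi hcoh hww' hyt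
        have hxt : Joins S E x t := ⟨c, c', hxw.trans hwc, htc', hcc'⟩
        have htz : Joins S E t z := ⟨t, t', Relation.ReflTransGen.refl, hzt', htt'⟩
        exact IH t hyt' x z hxt htz
    · -- y →⁺ w'
      have hyw'T : Relation.TransGen S y w' := Relation.TransGen.head' hy1 hy1w'
      have hxw'J : Joins S E x w' := ⟨w, w', hxw, Relation.ReflTransGen.refl, hww'⟩
      rcases Relation.ReflTransGen.cases_head hyt with rfl | ⟨y₂, hy2, hy2t⟩
      · -- case B2 : t = y
        obtain ⟨c, c', ht'c, hw'c', hcc'⟩ := semi hcoh (Relation.EqvGen.symm _ _ htt') hyw'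
        have hw'z : Joins S E w' z :=
          ⟨c', c, hw'c', hzt'.trans ht'c, Relation.EqvGen.symm _ _ hcc'⟩
        exact IH w' hyw'T x z hxw'J hw'z
      · -- case B1 : y →⁺ t too
        have hytT : Relation.TransGen S y t := Relation.TransGen.head' hy2 hy2t
        obtain ⟨a, a', hw'a, hta', haa'⟩ := hconf y w' t hyw' hyt
        have hyaT : Relation.TransGen S y a := Relation.TransGen.trans_left hyw'T hw'a
        have hw'a_J : Joins S E w' a :=
          ⟨a, a, hw'a, Relation.ReflTransGen.refl, Relation.EqvGen.refl a⟩
        have hatJ : Joins S E a t := ⟨a, a', Relation.ReflTransGen.refl, hta', haa'⟩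
        have htzJ : Joins S E t z := ⟨t, t', Relation.ReflTransGen.refl, hzt', htt'⟩
        have hazJ : Joins S E a z := IH t hytT a z hatJ htzJ
        have hw'zJ : Joins S E w' z := IH a hyaT w' z hw'a_J hazJ
        exact IH w' hyw'T x z hxw'J hw'zJ

end JKAux

/-- For a terminating rewriting system `S` modulo `E` (with `R ⊆ S ⊆ ERE`),
confluence modulo `E` is equivalent to JK-confluence together with JK-coherence modulo `E`. -/
theorem confluentModulo_iff_jkConfluent_and_jkCoherent
    {A : Type*} (R E S : A → A → Prop)
    (hRS : ∀ u v, R u v → S u v)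
    (hSE : ∀ u v, S u v → ∃ u' v',
      Relation.EqvGen E u u' ∧ R u' v' ∧ Relation.EqvGen E v' v)
    (hterm : ¬ ∃ f : ℕ → A, ∀ n, S (f n) (f (n + 1))) :
    ConfluentModulo S E ↔ (JKConfluentModulo S E ∧ JKCoherentModulo S E) := by
  constructor
  · intro hc
    constructor
    · intro u u' v' hu hv
      exact hc u u u' v' (Relation.EqvGen.refl u) hu hv
    · intro u u' v hu huv
      exact hc u v u' v huv hu Relation.ReflTransGen.refl
  · rintro ⟨hconf, hcoh⟩
    have hwfS : WellFounded (fun a b => S b a) := JKAux.wf_of_no_chain hterm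
    have hwf : WellFounded (fun a b => Relation.TransGen S b a) :=
      Subrelation.wf (fun h => Relation.TransGen.swap _ _ h) hwfS.transGen
    have htr := JKAux.joins_trans hconf hcoh hwf
    intro u v u' v' huv hu hv
    have h1 : JKAux.Joins S E u' u :=
      ⟨u', u', Relation.ReflTransGen.refl, hu, Relation.EqvGen.refl u'⟩
    have h2 : JKAux.Joins S E u v :=
      ⟨u, v, Relation.ReflTransGen.refl, Relation.ReflTransGen.refl, huv⟩
    have h3 : JKAux.Joins S E v v' :=
      ⟨v', v', hv, Relation.ReflTransGen.refl, Relation.EqvGen.refl v'⟩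
    obtain ⟨w, w', hw, hw', hww'⟩ := htr v u' v' (htr u u' v h1 h2) h3
    exact ⟨w, w', hw, hw', hww'⟩
end

section
/- Let A be a type, R and E binary relations on A, and S a binary relation with R ⊆ S ⊆ ERE. If S is terminating, then S is confluent modulo E if and only if S is Church-Rosser modulo E. -/
/-- `S` is Church-Rosser modulo `E` (with respect to the congruence generated by `R ∪ E`). -/
def ChurchRosserModulo {A : Type*} (S R E : A → A → Prop) : Prop :=
  ∀ u v, Relation.EqvGen (fun a b => R a b ∨ E a b) u v →
    ∃ w w', RStar S u w ∧ RStar S v w' ∧ Relation.EqvGen E w w'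

/-- Every element has a normal form under a terminating relation. -/
lemma exists_normal_form {A : Type*} (S : A → A → Prop)
    (hterm : ¬ ∃ f : ℕ → A, ∀ n, S (f n) (f (n + 1))) (u : A) :
    ∃ n, RStar S u n ∧ ∀ x, ¬ S n x := by
  by_contra h
  push_neg at h
  have key : ∀ p : {x // RStar S u x}, ∃ q : {x // RStar S u x}, S p.val q.val := by
    rintro ⟨x, hx⟩
    obtain ⟨y, hy⟩ := h x hx
    exact ⟨⟨y, hx.tail hy⟩, hy⟩
  choose g hg using key
  apply hterm
  refine ⟨fun n => (g^[n] ⟨u, Relation.ReflTransGen.refl⟩).val, ?_⟩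
  intro n
  have : g^[n+1] ⟨u, Relation.ReflTransGen.refl⟩
      = g (g^[n] ⟨u, Relation.ReflTransGen.refl⟩) :=
    Function.iterate_succ_apply' g n _
  show S (g^[n] ⟨u, Relation.ReflTransGen.refl⟩).val
      (g^[n+1] ⟨u, Relation.ReflTransGen.refl⟩).val
  rw [this]
  exact hg _

lemma normal_rstar_eq {A : Type*} {S : A → A → Prop} {m w : A}
    (hm : ∀ x, ¬ S m x) (h : RStar S m w) : m = w := by
  rcases Relation.ReflTransGen.cases_head h with rfl | ⟨c, hc, _⟩
  · rfl
  · exact absurd hc (hm c)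

/-- Normal forms of `E`-equivalent elements are `E`-equivalent, under confluence. -/
lemma normal_forms_eqv {A : Type*} {S E : A → A → Prop}
    (hconf : ConfluentModulo S E) {x y m n : A}
    (hxy : Relation.EqvGen E x y) (hxm : RStar S x m) (hyn : RStar S y n)
    (hm : ∀ z, ¬ S m z) (hn : ∀ z, ¬ S n z) : Relation.EqvGen E m n := by
  obtain ⟨w, w', h1, h2, h3⟩ := hconf x y m n hxy hxm hyn
  rw [normal_rstar_eq hm h1, normal_rstar_eq hn h2]
  exact h3

/-- For a terminating rewriting system `S` modulo `E` (with `R ⊆ S ⊆ ERE`),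
confluence modulo `E` is equivalent to the Church-Rosser property modulo `E`. -/
theorem confluentModulo_iff_churchRosserModulo
    {A : Type*} (R E S : A → A → Prop)
    (hRS : ∀ u v, R u v → S u v)
    (hSE : ∀ u v, S u v → ∃ u' v',
      Relation.EqvGen E u u' ∧ R u' v' ∧ Relation.EqvGen E v' v)
    (hterm : ¬ ∃ f : ℕ → A, ∀ n, S (f n) (f (n + 1))) :
    ConfluentModulo S E ↔ ChurchRosserModulo S R E := by
  constructor
  · intro hconf u v h
    induction h with
    | rel a b hab =>
      rcases hab with h | h
      · exact ⟨b, b, Relation.ReflTransGen.single (hRS _ _ h),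
          Relation.ReflTransGen.refl, Relation.EqvGen.refl b⟩
      · exact ⟨a, b, Relation.ReflTransGen.refl, Relation.ReflTransGen.refl,
          Relation.EqvGen.rel _ _ h⟩
    | refl a =>
      exact ⟨a, a, Relation.ReflTransGen.refl, Relation.ReflTransGen.refl,
        Relation.EqvGen.refl a⟩
    | symm a b _ ih =>
      obtain ⟨w, w', h1, h2, h3⟩ := ih
      exact ⟨w', w, h2, h1, h3.symm⟩
    | trans a b c _ _ ih1 ih2 =>
      obtain ⟨w1, w2, ha1, hb2, e12⟩ := ih1
      obtain ⟨w3, w4, hb3, hc4, e34⟩ := ih2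
      obtain ⟨n1, hn1, hn1'⟩ := exists_normal_form S hterm w1
      obtain ⟨n2, hn2, hn2'⟩ := exists_normal_form S hterm w2
      obtain ⟨n3, hn3, hn3'⟩ := exists_normal_form S hterm w3
      obtain ⟨n4, hn4, hn4'⟩ := exists_normal_form S hterm w4
      have e12' : Relation.EqvGen E n1 n2 :=
        normal_forms_eqv hconf e12 hn1 hn2 hn1' hn2'
      have e23' : Relation.EqvGen E n2 n3 :=
        normal_forms_eqv hconf (Relation.EqvGen.refl b)
          (hb2.trans hn2) (hb3.trans hn3) hn2' hn3'
      have e34' : Relation.EqvGen E n3 n4 :=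
        normal_forms_eqv hconf e34 hn3 hn4 hn3' hn4'
      exact ⟨n1, n4, ha1.trans hn1, hc4.trans hn4, (e12'.trans _ _ _ e23').trans _ _ _ e34'⟩
  · intro hcr u v u' v' huv hu hv
    have liftE : ∀ {x y : A}, Relation.EqvGen E x y →
        Relation.EqvGen (fun a b => R a b ∨ E a b) x y := by
      intro x y h
      exact Relation.EqvGen.mono (fun a b hab => Or.inr hab) x y h
    have liftS : ∀ {x y : A}, RStar S x y →
        Relation.EqvGen (fun a b => R a b ∨ E a b) x y := by
      intro x y h
      induction h with
      | refl => exact Relation.EqvGen.refl _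
      | tail _ hst ih =>
        refine ih.trans _ _ _ ?_
        obtain ⟨p, q, h1, h2, h3⟩ := hSE _ _ hst
        exact ((liftE h1).trans _ _ _
          (Relation.EqvGen.rel _ _ (Or.inl h2))).trans _ _ _ (liftE h3)
    exact hcr u' v' (((liftS hu).symm _ _).trans _ _ _
      ((liftE huv).trans _ _ _ (liftS hv)))
end

section
/- Let A be a type, R and E binary relations on A, and S a binary relation with R ⊆ S ⊆ ERE. Suppose ERE is terminating. Then the following are equivalent: (i) S is confluent modulo E; (ii) S is locally confluent modulo E; (iii) both of the following hold: (a) for every u, a, b with S u a and R u b there exist w, w' with S* a w, S* b w' and w ≈_E w'; (b) for every u, a, v with S u a and (E u v or E v u) there exist w, w' with S* a w, S* v w' and w ≈_E w'. -/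
/-- The relation `ERE`: rewriting with `R` between representatives modulo `E`. -/
def EREmod {A : Type*} (R E : A → A → Prop) (u v : A) : Prop :=
  ∃ u' v', Relation.EqvGen E u u' ∧ R u' v' ∧ Relation.EqvGen E v' v

/-- `S` is locally confluent modulo `E`. -/
def LocallyConfluentModulo {A : Type*} (S E : A → A → Prop) : Prop :=
  (∀ u a b, S u a → S u b →
    ∃ w w', RStar S a w ∧ RStar S b w' ∧ Relation.EqvGen E w w') ∧
  (∀ u a v, S u a → (E u v ∨ E v u) →
    ∃ w w', RStar S a w ∧ RStar S v w' ∧ Relation.EqvGen E w w')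


namespace ConfModAux

variable {α : Type*}

/-- One-step multiset replacement: `M` is obtained from `N` by replacing one
occurrence of some `a` by a multiset of elements all smaller than `a`. -/
def MStep (lt : α → α → Prop) (M N : Multiset α) : Prop :=
  ∃ a K W, N = a ::ₘ K ∧ M = W + K ∧ ∀ w ∈ W, lt w a

variable {lt : α → α → Prop}

theorem MStep.cons {M N : Multiset α} (c : α) (h : MStep lt M N) :
    MStep lt (c ::ₘ M) (c ::ₘ N) := by
  obtain ⟨a, K, W, rfl, rfl, hW⟩ := h
  exact ⟨a, c ::ₘ K, W, by rw [Multiset.cons_swap], by rw [Multiset.add_cons], hW⟩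

theorem MStep.remove (a : α) (K : Multiset α) : MStep lt K (a ::ₘ K) :=
  ⟨a, K, 0, rfl, (zero_add K).symm, by simp⟩

theorem MStep.replace {a : α} {W : Multiset α} (K : Multiset α) (hW : ∀ w ∈ W, lt w a) :
    MStep lt (W + K) (a ::ₘ K) := ⟨a, K, W, rfl, rfl, hW⟩

private theorem acc_add (iha : ∀ b, lt b a → ∀ M, Acc (MStep lt) M → Acc (MStep lt) (b ::ₘ M)) :
    ∀ (W : Multiset α), (∀ w ∈ W, lt w a) → ∀ M, Acc (MStep lt) M → Acc (MStep lt) (W + M) := by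
  intro W
  induction W using Multiset.induction_on with
  | empty => intro _ M hM; simpa using hM
  | cons w W ih =>
    intro hW M hM
    rw [Multiset.cons_add]
    exact iha w (hW w (by simp)) _ (ih (fun x hx => hW x (by simp [hx])) M hM)

theorem acc_cons : ∀ a, Acc lt a → ∀ M, Acc (MStep lt) M → Acc (MStep lt) (a ::ₘ M) := by
  intro a ha
  induction ha with
  | intro a _ iha =>
    intro M hM
    induction hM with
    | intro M hMacc ihM =>
      constructor
      intro N hN
      obtain ⟨b, K, W, hNK, rfl, hW⟩ := hN
      rcases Multiset.cons_eq_cons.mp hNK with ⟨rfl, rfl⟩ | ⟨-, L, hM', hK⟩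
      · exact acc_add iha W hW M (Acc.intro M hMacc)
      · subst hM'
        subst hK
        rw [Multiset.add_cons]
        exact ihM _ ⟨b, L, W, rfl, rfl, hW⟩

theorem mstep_wf (h : WellFounded lt) : WellFounded (MStep lt) := by
  constructor
  intro M
  induction M using Multiset.induction_on with
  | empty =>
    constructor
    rintro N ⟨a, K, W, hK, -, -⟩
    exact absurd hK (by simp)
  | cons a M ih => exact acc_cons a (h.apply a) M ih

/-- The multiset ordering: transitive closure of single replacement. -/
def MLt (lt : α → α → Prop) : Multiset α → Multiset α → Prop :=
  Relation.TransGen (MStep lt)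

def MLe (lt : α → α → Prop) (M N : Multiset α) : Prop := M = N ∨ MLt lt M N

theorem mlt_wf (h : WellFounded lt) : WellFounded (MLt lt) :=
  (mstep_wf h).transGen

theorem MLt.trans {M N P : Multiset α} (h1 : MLt lt M N) (h2 : MLt lt N P) : MLt lt M P :=
  Relation.TransGen.trans h1 h2

theorem MLe.refl (M : Multiset α) : MLe lt M M := Or.inl rfl

theorem MLt.mle {M N : Multiset α} (h : MLt lt M N) : MLe lt M N := Or.inr h

theorem MLe.trans_mlt {M N P : Multiset α} (h1 : MLe lt M N) (h2 : MLt lt N P) : MLt lt M P := by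
  rcases h1 with rfl | h1
  · exact h2
  · exact h1.trans h2

theorem MLt.trans_mle {M N P : Multiset α} (h1 : MLt lt M N) (h2 : MLe lt N P) : MLt lt M P := by
  rcases h2 with rfl | h2
  · exact h1
  · exact h1.trans h2

theorem MLe.trans {M N P : Multiset α} (h1 : MLe lt M N) (h2 : MLe lt N P) : MLe lt M P := by
  rcases h1 with rfl | h1
  · exact h2
  · exact (h1.trans_mle h2).mle

theorem MLt.cons {M N : Multiset α} (c : α) (h : MLt lt M N) : MLt lt (c ::ₘ M) (c ::ₘ N) := by
  induction h with
  | single h => exact Relation.TransGen.single (h.cons c)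
  | tail _ h ih => exact Relation.TransGen.tail ih (h.cons c)

theorem MLe.cons {M N : Multiset α} (c : α) (h : MLe lt M N) : MLe lt (c ::ₘ M) (c ::ₘ N) := by
  rcases h with rfl | h
  · exact MLe.refl _
  · exact (h.cons c).mle

/-- removing a submultiset only decreases. -/
theorem mle_add_right (W M : Multiset α) : MLe lt M (W + M) := by
  induction W using Multiset.induction_on with
  | empty => simp [MLe]
  | cons w W ih =>
    rw [Multiset.cons_add]
    exact ih.trans_mlt (Relation.TransGen.single (MStep.remove w (W + M))) |>.mle

/-- replace an `a` by smaller stuff and drop the rest. -/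
theorem mlt_below_cons {W : Multiset α} {a : α} (K : Multiset α) (hW : ∀ w ∈ W, lt w a) :
    MLt lt W (a ::ₘ K) := by
  have := (mle_add_right K W).trans_mlt (Relation.TransGen.single (by rw [add_comm]; exact MStep.replace K hW : MStep lt (K + W) (a ::ₘ K)))
  exact this

/-- replace an `a` by smaller stuff, keeping context. -/
theorem mlt_replace_cons {W : Multiset α} {a : α} (K : Multiset α) (hW : ∀ w ∈ W, lt w a) :
    MLt lt (W + K) (a ::ₘ K) :=
  Relation.TransGen.single (MStep.replace K hW)

/-- `W + C < a ::ₘ a ::ₘ C` when all of `W` is below `a`. -/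
theorem mlt_below_two {W : Multiset α} {a : α} (C : Multiset α) (hW : ∀ w ∈ W, lt w a) :
    MLt lt (W + C) (a ::ₘ a ::ₘ C) := by
  have h1 : MStep lt (W + (a ::ₘ C)) (a ::ₘ a ::ₘ C) := MStep.replace _ hW
  have h2 : MStep lt (W + C) (W + (a ::ₘ C)) := by
    rw [Multiset.add_cons]
    exact MStep.remove a (W + C)
  exact Relation.TransGen.tail (Relation.TransGen.single h2) h1

end ConfModAux
namespace ConfModAux

section Conf

variable {A : Type*} (R E S : A → A → Prop)

local notation "Eqv" => Relation.EqvGen E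

/-- absorption of the equivalence into `ERE`. -/
theorem ere_absorb {a a' b b' : A} (h1 : Relation.EqvGen E a a')
    (h : ∃ u v, Relation.EqvGen E a' u ∧ R u v ∧ Relation.EqvGen E v b)
    (h2 : Relation.EqvGen E b b') :
    ∃ u v, Relation.EqvGen E a u ∧ R u v ∧ Relation.EqvGen E v b' := by
  obtain ⟨u, v, hu, hR, hv⟩ := h
  exact ⟨u, v, Relation.EqvGen.trans _ _ _ h1 hu, hR,
    Relation.EqvGen.trans _ _ _ hv h2⟩

/-- The type of `E`-equivalence classes. -/
abbrev B := Quotient (Relation.EqvGen.setoid E)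

/-- class of an element -/
abbrev cl (a : A) : B E := Quotient.mk (Relation.EqvGen.setoid E) a

theorem cl_eq_of_eqv {a b : A} (h : Relation.EqvGen E a b) : cl E a = cl E b :=
  Quotient.sound h

theorem eqv_of_cl_eq {a b : A} (h : cl E a = cl E b) : Relation.EqvGen E a b :=
  Quotient.exact h

/-- `below c d`: one `ERE`-step down from class `d` to class `c`. -/
def below : B E → B E → Prop := fun c d =>
  Quotient.liftOn₂ c d (fun x y => ∃ u v, Relation.EqvGen E y u ∧ R u v ∧ Relation.EqvGen E v x)
    (by
      intro x y x' y' hx hy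
      apply propext
      constructor
      · intro h
        exact ere_absorb R E (Relation.EqvGen.symm _ _ hy) h hx
      · intro h
        exact ere_absorb R E hy h (Relation.EqvGen.symm _ _ hx))

theorem below_mk {x y : A} :
    below R E (cl E x) (cl E y) ↔ ∃ u v, Relation.EqvGen E y u ∧ R u v ∧ Relation.EqvGen E v x :=
  Iff.rfl

/-- strictly-below: transitive closure. -/
def bl : B E → B E → Prop := Relation.TransGen (below R E)

def ble (c d : B E) : Prop := c = d ∨ bl R E c d

theorem wf_of_no_chain {X : Type*} {r : X → X → Prop}
    (h : ¬ ∃ f : ℕ → X, ∀ n, r (f n) (f (n + 1))) : WellFounded (fun b a => r a b) := by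
  by_contra hwf
  have hex : ∃ a, ¬ Acc (fun b a => r a b) a := by
    by_contra h2
    push_neg at h2
    exact hwf ⟨h2⟩
  obtain ⟨a, ha⟩ := hex
  have step : ∀ x, ¬ Acc (fun b a => r a b) x → ∃ y, r x y ∧ ¬ Acc (fun b a => r a b) y := by
    intro x hx
    by_contra h2
    push_neg at h2
    exact hx (Acc.intro x fun y hy => h2 y hy)
  choose g hg1 hg2 using step
  let F : ℕ → {x : X // ¬ Acc (fun b a => r a b) x} :=
    fun n => Nat.rec ⟨a, ha⟩ (fun _ p => ⟨g p.1 p.2, hg2 p.1 p.2⟩) n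
  exact h ⟨fun n => (F n).1, fun n => hg1 (F n).1 (F n).2⟩

theorem bl_wf (hterm : ¬ ∃ f : ℕ → A, ∀ n, EREmod R E (f n) (f (n + 1))) :
    WellFounded (bl R E) := by
  have hA : WellFounded (fun b a : A => EREmod R E a b) := wf_of_no_chain hterm
  have hB : WellFounded (below R E) := by
    constructor
    intro c
    induction c using Quotient.ind with
    | _ a =>
      induction (hA.apply a) with
      | intro a _ ih =>
        constructor
        intro c hc
        induction c using Quotient.ind with
        | _ b => exact ih b hc
  exact hB.transGen

theorem ble.refl (c : B E) : ble R E c c := Or.inl rfl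

theorem bl.trans {c d e : B E} (h1 : bl R E c d) (h2 : bl R E d e) : bl R E c e :=
  Relation.TransGen.trans h1 h2

theorem ble_bl_trans {c d e : B E} (h1 : ble R E c d) (h2 : bl R E d e) : bl R E c e := by
  rcases h1 with rfl | h1
  · exact h2
  · exact Relation.TransGen.trans h1 h2

theorem bl_ble_trans {c d e : B E} (h1 : bl R E c d) (h2 : ble R E d e) : bl R E c e := by
  rcases h2 with rfl | h2
  · exact h1
  · exact Relation.TransGen.trans h1 h2

theorem ble.trans {c d e : B E} (h1 : ble R E c d) (h2 : ble R E d e) : ble R E c e := by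
  rcases h2 with rfl | h2
  · exact h1
  · exact Or.inr (ble_bl_trans R E h1 h2)

theorem wf_irrefl {X : Type*} {r : X → X → Prop} (wf : WellFounded r) : ∀ a, ¬ r a a := by
  intro a
  induction a using wf.induction with
  | _ a ih => exact fun h => ih a h h

theorem bl_irrefl (hterm : ¬ ∃ f : ℕ → A, ∀ n, EREmod R E (f n) (f (n + 1))) (c : B E) :
    ¬ bl R E c c := wf_irrefl (bl_wf R E hterm) c

end Conf

end ConfModAux
namespace ConfModAux

section Data

variable {A : Type*} (S E : A → A → Prop)

/-- explicit `S`-derivations -/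
inductive Deriv : A → A → Type _
  | nil (a : A) : Deriv a a
  | cons {a b c : A} (h : S a b) (d : Deriv b c) : Deriv a c

/-- explicit `E`-chains (in either direction) -/
inductive EChain : A → A → Type _
  | nil (a : A) : EChain a a
  | cons {a b c : A} (h : E a b ∨ E b a) (d : EChain b c) : EChain a c

/-- explicit conversions -/
inductive Conv : A → A → Type _
  | nil (a : A) : Conv a a
  | fwd {a b c : A} (h : S a b) (d : Conv b c) : Conv a c
  | bwd {a b c : A} (h : S b a) (d : Conv b c) : Conv a c
  | eqv {a b c : A} (h : E a b ∨ E b a) (d : Conv b c) : Conv a c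

variable {S E}

def Deriv.append : ∀ {a b c : A}, Deriv S a b → Deriv S b c → Deriv S a c
  | _, _, _, .nil _, d2 => d2
  | _, _, _, .cons h d, d2 => .cons h (d.append d2)

def EChain.append : ∀ {a b c : A}, EChain E a b → EChain E b c → EChain E a c
  | _, _, _, .nil _, d2 => d2
  | _, _, _, .cons h d, d2 => .cons h (d.append d2)

def EChain.rev : ∀ {a b : A}, EChain E a b → EChain E b a
  | _, _, .nil a => .nil a
  | _, _, .cons h d => d.rev.append (.cons (h.symm) (.nil _))

def Conv.append : ∀ {a b c : A}, Conv S E a b → Conv S E b c → Conv S E a c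
  | _, _, _, .nil _, d2 => d2
  | _, _, _, .fwd h d, d2 => .fwd h (d.append d2)
  | _, _, _, .bwd h d, d2 => .bwd h (d.append d2)
  | _, _, _, .eqv h d, d2 => .eqv h (d.append d2)

/-- conversion from a forward derivation -/
def Deriv.toConv : ∀ {a b : A}, Deriv S a b → Conv S E a b
  | _, _, .nil a => .nil a
  | _, _, .cons h d => .fwd h d.toConv

/-- reversed conversion from a derivation: from the target back to the source -/
def Deriv.toConvRev : ∀ {a b : A}, Deriv S a b → Conv S E b a
  | _, _, .nil a => .nil a
  | _, _, .cons h d => d.toConvRev.append (.bwd h (.nil _))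

def EChain.toConv : ∀ {a b : A}, EChain E a b → Conv S E a b
  | _, _, .nil a => .nil a
  | _, _, .cons h d => .eqv h d.toConv

def Deriv.toRStar : ∀ {a b : A}, Deriv S a b → RStar S a b
  | _, _, .nil _ => Relation.ReflTransGen.refl
  | _, _, .cons h d => Relation.ReflTransGen.head h d.toRStar

def EChain.toEqv : ∀ {a b : A}, EChain E a b → Relation.EqvGen E a b
  | _, _, .nil a => Relation.EqvGen.refl a
  | _, _, .cons (b := m) h d =>
      Relation.EqvGen.trans _ m _
        (h.elim (Relation.EqvGen.rel _ _) (fun h' => Relation.EqvGen.symm _ _ (Relation.EqvGen.rel _ _ h')))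
        d.toEqv

theorem deriv_of_rstar {a b : A} (h : RStar S a b) : Nonempty (Deriv S a b) := by
  induction h with
  | refl => exact ⟨.nil a⟩
  | tail _ h ih => exact ⟨ih.some.append (.cons h (.nil _))⟩

theorem echain_of_eqv {a b : A} (h : Relation.EqvGen E a b) : Nonempty (EChain E a b) := by
  induction h with
  | rel x y h => exact ⟨.cons (Or.inl h) (.nil _)⟩
  | refl x => exact ⟨.nil x⟩
  | symm x y _ ih => exact ⟨ih.some.rev⟩
  | trans x y z _ _ ih1 ih2 => exact ⟨ih1.some.append ih2.some⟩

end Data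

section Cost

variable {A : Type*} {S : A → A → Prop} (E : A → A → Prop)

/-- cost of a derivation: classes of the sources of its steps -/
def Deriv.cost : ∀ {a b : A}, Deriv S a b → Multiset (B E)
  | _, _, .nil _ => 0
  | _, _, .cons (a := a) _ d => cl E a ::ₘ d.cost

def EChain.cost : ∀ {a b : A}, EChain E a b → Multiset (B E)
  | _, _, .nil _ => 0
  | _, _, .cons (a := a) _ d => cl E a ::ₘ d.cost

def Conv.cost : ∀ {a b : A}, Conv S E a b → Multiset (B E)
  | _, _, .nil _ => 0
  | _, _, .fwd (a := a) _ d => cl E a ::ₘ d.cost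
  | _, _, .bwd (b := b) _ d => cl E b ::ₘ d.cost
  | _, _, .eqv (a := a) _ d => cl E a ::ₘ d.cost

variable {E}

end Cost

end ConfModAux
namespace ConfModAux

section CostLemmas

variable {A : Type*} {S : A → A → Prop} {R E : A → A → Prop}

theorem Conv.cost_append : ∀ {a b c : A} (d1 : Conv S E a b) (d2 : Conv S E b c),
    (d1.append d2).cost = d1.cost (E := E) + d2.cost := by
  intro a b c d1 d2
  induction d1 with
  | nil => simp [Conv.append, Conv.cost]
  | fwd h d ih => simp [Conv.append, Conv.cost, ih, Multiset.cons_add]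
  | bwd h d ih => simp [Conv.append, Conv.cost, ih, Multiset.cons_add]
  | eqv h d ih => simp [Conv.append, Conv.cost, ih, Multiset.cons_add]

theorem Deriv.cost_toConv : ∀ {a b : A} (d : Deriv S a b),
    (d.toConv (E := E)).cost = d.cost (E := E) := by
  intro a b d
  induction d with
  | nil => rfl
  | cons h d ih => simp [Deriv.toConv, Conv.cost, Deriv.cost, ih]

theorem Deriv.cost_toConvRev : ∀ {a b : A} (d : Deriv S a b),
    (d.toConvRev (E := E)).cost = d.cost (E := E) := by
  intro a b d
  induction d with
  | nil => rfl
  | cons h d ih =>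
    simp only [Deriv.toConvRev, Conv.cost_append, Conv.cost, Deriv.cost, ih]
    rw [Multiset.add_cons, add_zero]

theorem EChain.cost_toConv : ∀ {a b : A} (e : EChain E a b),
    (e.toConv (S := S)).cost = e.cost := by
  intro a b e
  induction e with
  | nil => rfl
  | cons h e ih => simp [EChain.toConv, Conv.cost, EChain.cost, ih]

/-- one `S`-step goes strictly down in classes -/
theorem bl_of_step (hSE : ∀ u v, S u v → EREmod R E u v) {a b : A} (h : S a b) :
    bl R E (cl E b) (cl E a) :=
  Relation.TransGen.single (hSE a b h)

theorem Deriv.ble_end (hSE : ∀ u v, S u v → EREmod R E u v) :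
    ∀ {a b : A} (d : Deriv S a b), ble R E (cl E b) (cl E a) := by
  intro a b d
  induction d with
  | nil => exact ble.refl R E _
  | cons h d ih => exact ble.trans R E ih (Or.inr (bl_of_step hSE h))

theorem Deriv.cost_ble (hSE : ∀ u v, S u v → EREmod R E u v) :
    ∀ {a b : A} (d : Deriv S a b), ∀ c ∈ d.cost (E := E), ble R E c (cl E a) := by
  intro a b d
  induction d with
  | nil => simp [Deriv.cost]
  | cons h d ih =>
    intro c hc
    rw [Deriv.cost, Multiset.mem_cons] at hc
    rcases hc with rfl | hc
    · exact ble.refl R E _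
    · exact ble.trans R E (ih c hc) (Or.inr (bl_of_step hSE h))

theorem EChain.cl_end : ∀ {a b : A} (e : EChain E a b), cl E b = cl E a := by
  intro a b e
  induction e with
  | nil => rfl
  | cons h e ih =>
    have hm := cl_eq_of_eqv (E := E) (h.elim (Relation.EqvGen.rel _ _)
      (fun h' => Relation.EqvGen.symm _ _ (Relation.EqvGen.rel _ _ h')))
    exact ih.trans hm.symm

theorem EChain.cost_mem : ∀ {a b : A} (e : EChain E a b), ∀ c ∈ e.cost, c = cl E a := by
  intro a b e
  induction e with
  | nil => simp [EChain.cost]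
  | cons h e ih =>
    intro c hc
    rw [EChain.cost, Multiset.mem_cons] at hc
    rcases hc with rfl | hc
    · rfl
    · rw [ih c hc]
      have hm := cl_eq_of_eqv (E := E) (h.elim (Relation.EqvGen.rel _ _)
        (fun h' => Relation.EqvGen.symm _ _ (Relation.EqvGen.rel _ _ h')))
      exact hm.symm

end CostLemmas

end ConfModAux
namespace ConfModAux

section Main

variable {A : Type*} (R E S : A → A → Prop)

/-- extra cost lemma -/
theorem Deriv.cost_append' : ∀ {a b c : A} (d1 : Deriv S a b) (d2 : Deriv S b c),
    (d1.append d2).cost (E := E) = d1.cost (E := E) + d2.cost (E := E) := by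
  intro a b c d1 d2
  induction d1 with
  | nil => simp [Deriv.append, Deriv.cost]
  | cons h d ih => simp [Deriv.append, Deriv.cost, ih, Multiset.cons_add]

/-- the valley property for all conversions of cost `m` -/
def VProp (m : Multiset (B E)) : Prop :=
  ∀ {x y : A} (γ : Conv S E x y), γ.cost (E := E) = m →
    ∃ (p q : A) (f : Deriv S x p) (e : EChain E p q) (g : Deriv S y q),
      MLe (bl R E) (f.cost (E := E) + (e.cost + g.cost (E := E))) m

variable {R E S}
variable (hRS : ∀ u v, R u v → S u v)
  (hSE : ∀ u v, S u v → EREmod R E u v)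
  (hterm : ¬ ∃ f : ℕ → A, ∀ n, EREmod R E (f n) (f (n + 1)))
  (ha : ∀ u a b, S u a → R u b →
    ∃ w w', RStar S a w ∧ RStar S b w' ∧ Relation.EqvGen E w w')
  (hb : ∀ u a v, S u a → (E u v ∨ E v u) →
    ∃ w w', RStar S a w ∧ RStar S v w' ∧ Relation.EqvGen E w w')

section Helpers

theorem cl_eq_estep {a b : A} (h : E a b ∨ E b a) : cl E a = cl E b :=
  cl_eq_of_eqv (E := E) (h.elim (Relation.EqvGen.rel _ _)
    (fun h' => Relation.EqvGen.symm _ _ (Relation.EqvGen.rel _ _ h')))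

include hSE hterm in
theorem step_drop_contra {t x p z : A} (hbl : bl R E (cl E x) (cl E t))
    (hxp : RStar S x p) (heq : Relation.EqvGen E p z) (hz : cl E z = cl E t) : False := by
  obtain ⟨d⟩ := deriv_of_rstar hxp
  have h1 : ble R E (cl E p) (cl E x) := d.ble_end hSE
  have h2 : cl E p = cl E t := (cl_eq_of_eqv (E := E) heq).trans hz
  have h3 : bl R E (cl E t) (cl E t) := ble_bl_trans R E (h2 ▸ h1) hbl
  exact bl_irrefl R E hterm _ h3

theorem all_mem_add {P : B E → Prop} {M N : Multiset (B E)}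
    (h1 : ∀ c ∈ M, P c) (h2 : ∀ c ∈ N, P c) : ∀ c ∈ M + N, P c := by
  intro c hc
  rcases Multiset.mem_add.mp hc with h | h
  · exact h1 c h
  · exact h2 c h

include hSE in
theorem deriv_cost_below {a b : A} {t' : B E} (d : Deriv S a b) (hba : bl R E (cl E a) t') :
    ∀ c ∈ d.cost (E := E), bl R E c t' :=
  fun c hc => ble_bl_trans R E (d.cost_ble hSE c hc) hba

theorem echain_cost_below {a b : A} {t' : B E} (e : EChain E a b) (hba : bl R E (cl E a) t') :
    ∀ c ∈ e.cost, bl R E c t' :=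
  fun c hc => (EChain.cost_mem e c hc) ▸ hba

/-- combine: `W + C < a ::ₘ C ≤ m'` -/
theorem mlt_glue1 {W C m' : Multiset (B E)} {a : B E} (hW : ∀ c ∈ W, bl R E c a)
    (h : MLe (bl R E) (a ::ₘ C) m') : MLt (bl R E) (W + C) m' :=
  (mlt_replace_cons C hW).trans_mle h

/-- combine: `W + C < a ::ₘ a ::ₘ C ≤ a ::ₘ m'` -/
theorem mlt_glue2 {W C m' : Multiset (B E)} {a : B E} (hW : ∀ c ∈ W, bl R E c a)
    (h : MLe (bl R E) (a ::ₘ C) m') : MLt (bl R E) (W + C) (a ::ₘ m') :=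
  (mlt_below_two C hW).trans_mle (h.cons a)

end Helpers

include hRS hSE hterm ha hb in
theorem subclaim (m : Multiset (B E))
    (IH : ∀ m', MLt (bl R E) m' m → VProp R E S m') :
    ∀ {t u₀ : A} (ch : EChain E t u₀) {x b₁ : A}, S t x → R u₀ b₁ →
      (∀ M : Multiset (B E), (∀ c ∈ M, bl R E c (cl E t)) → MLt (bl R E) M m) →
      ∃ p q, RStar S x p ∧ RStar S b₁ q ∧ Relation.EqvGen E p q := by
  intro t u₀ ch
  induction ch with
  | nil a =>
    intro x b₁ hx hR _
    exact ha a x b₁ hx hR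
  | @cons t f₁ u₀ h ch' ih =>
    intro x b₁ hx hR hc
    have hclf : cl E t = cl E f₁ := cl_eq_estep h
    obtain ⟨p, p', hxp, hfp, heq⟩ := hb t x f₁ hx h
    obtain ⟨df⟩ := deriv_of_rstar hfp
    cases df with
    | nil =>
      exact absurd (step_drop_contra hSE hterm (bl_of_step hSE hx) hxp heq hclf.symm) id
    | @cons _ g₁ _ hg df' =>
      -- recursive call along the chain
      obtain ⟨r, r', hgr, hbr, heq2⟩ := ih hg hR (by rw [← hclf]; exact hc)
      -- build the small conversion from x to b₁
      obtain ⟨dxp⟩ := deriv_of_rstar hxp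
      obtain ⟨ecpp⟩ := echain_of_eqv heq
      obtain ⟨dgr⟩ := deriv_of_rstar hgr
      obtain ⟨ecrr⟩ := echain_of_eqv heq2
      obtain ⟨dbr⟩ := deriv_of_rstar hbr
      set δ : Conv S E x b₁ :=
        (dxp.toConv).append ((ecpp.toConv).append ((df'.toConvRev).append
          ((dgr.toConv).append ((ecrr.toConv).append (dbr.toConvRev))))) with hδ
      have hgb : bl R E (cl E g₁) (cl E t) := by
        rw [hclf]; exact bl_of_step hSE hg
      have hbb : bl R E (cl E b₁) (cl E t) := by
        have h1 : bl R E (cl E b₁) (cl E u₀) := bl_of_step hSE (hRS _ _ hR)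
        have h2 : cl E u₀ = cl E f₁ := EChain.cl_end ch'
        rw [hclf, ← h2]; exact h1
      have hxb : bl R E (cl E x) (cl E t) := bl_of_step hSE hx
      have hcost : ∀ c ∈ δ.cost (E := E), bl R E c (cl E t) := by
        rw [hδ]
        simp only [Conv.cost_append, Deriv.cost_toConv, Deriv.cost_toConvRev, EChain.cost_toConv]
        refine all_mem_add (deriv_cost_below hSE dxp hxb) ?_
        refine all_mem_add (echain_cost_below ecpp ?_) ?_
        · exact ble_bl_trans R E (dxp.ble_end hSE) hxb
        refine all_mem_add (deriv_cost_below hSE df' hgb) ?_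
        refine all_mem_add (deriv_cost_below hSE dgr hgb) ?_
        refine all_mem_add (echain_cost_below ecrr ?_) (deriv_cost_below hSE dbr hbb)
        exact ble_bl_trans R E (dgr.ble_end hSE) hgb
      obtain ⟨pp, qq, ff, ee, gg, -⟩ := IH _ (hc _ hcost) δ rfl
      exact ⟨pp, qq, ff.toRStar, gg.toRStar, ee.toEqv⟩

end Main

end ConfModAux
namespace ConfModAux

section Main2

variable {A : Type*} {R E S : A → A → Prop}
variable (hRS : ∀ u v, R u v → S u v)
  (hSE : ∀ u v, S u v → EREmod R E u v)
  (hterm : ¬ ∃ f : ℕ → A, ∀ n, EREmod R E (f n) (f (n + 1)))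
  (ha : ∀ u a b, S u a → R u b →
    ∃ w w', RStar S a w ∧ RStar S b w' ∧ Relation.EqvGen E w w')
  (hb : ∀ u a v, S u a → (E u v ∨ E v u) →
    ∃ w w', RStar S a w ∧ RStar S v w' ∧ Relation.EqvGen E w w')

include hRS hSE hterm ha hb in
theorem main_step (m : Multiset (B E))
    (IH : ∀ m', MLt (bl R E) m' m → VProp R E S m') : VProp R E S m := by
  intro x y γ hm
  subst hm
  cases γ with
  | nil =>
    exact ⟨x, x, .nil x, .nil x, .nil x, Or.inl (by simp [Deriv.cost, EChain.cost, Conv.cost])⟩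
  | @fwd _ t _ h γ' =>
    obtain ⟨p, q, f, e, g, hle⟩ :=
      IH (γ'.cost (E := E)) (Relation.TransGen.single (MStep.remove _ _)) γ' rfl
    refine ⟨p, q, .cons h f, e, g, ?_⟩
    show MLe (bl R E) ((cl E x ::ₘ f.cost (E := E)) + (e.cost + g.cost (E := E))) _
    rw [Multiset.cons_add]
    exact hle.cons _
  | @eqv _ t _ h γ' =>
    obtain ⟨p, q, f, e, g, hle⟩ :=
      IH (γ'.cost (E := E)) (Relation.TransGen.single (MStep.remove _ _)) γ' rfl
    have hcl : cl E x = cl E t := cl_eq_estep h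
    cases f with
    | nil =>
      refine ⟨x, q, .nil x, .cons h e, g, ?_⟩
      show MLe (bl R E) (0 + ((cl E x ::ₘ e.cost) + g.cost (E := E))) _
      rw [zero_add, Multiset.cons_add]
      refine MLe.cons _ ?_
      simp only [Deriv.cost, EChain.cost, zero_add] at hle
      exact hle
    | @cons _ t₁ _ h₁ f' =>
      -- cliff from the left: x ~ t → t₁
      obtain ⟨p₂, p₂', hp₂, hp₂', heq⟩ := hb t t₁ x h₁ h.symm
      obtain ⟨dx⟩ := deriv_of_rstar hp₂'
      cases dx with
      | nil =>
        refine absurd (step_drop_contra hSE hterm (t := x) ?_ hp₂ heq rfl) id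
        rw [hcl]
        exact bl_of_step hSE h₁
      | @cons _ x₁ _ hx dx' =>
        obtain ⟨dt₁⟩ := deriv_of_rstar hp₂
        obtain ⟨ecp⟩ := echain_of_eqv (Relation.EqvGen.symm _ _ heq)
        -- conversion x₁ →* p₂' ~* p₂ ←* t₁ →* p ~* q ←* y
        set δ : Conv S E x₁ y :=
          (dx'.toConv).append ((ecp.toConv).append ((dt₁.toConvRev).append
            ((f'.toConv).append ((e.toConv).append (g.toConvRev))))) with hδ
        have hx₁ : bl R E (cl E x₁) (cl E x) := bl_of_step hSE hx
        have ht₁ : bl R E (cl E t₁) (cl E x) := hcl ▸ bl_of_step hSE h₁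
        have hWbound : ∀ c ∈ dx'.cost (E := E) + (ecp.cost + dt₁.cost (E := E)),
            bl R E c (cl E x) := by
          refine all_mem_add (deriv_cost_below hSE dx' hx₁) ?_
          refine all_mem_add (echain_cost_below ecp ?_) (deriv_cost_below hSE dt₁ ht₁)
          exact ble_bl_trans R E (dx'.ble_end hSE) hx₁
        have hδcost : δ.cost (E := E) =
            (dx'.cost (E := E) + (ecp.cost + dt₁.cost (E := E))) +
              (f'.cost (E := E) + (e.cost + g.cost (E := E))) := by
          rw [hδ]
          simp only [Conv.cost_append, Deriv.cost_toConv, Deriv.cost_toConvRev,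
            EChain.cost_toConv]
          abel
        have hle' : MLe (bl R E) (cl E x ::ₘ (f'.cost (E := E) + (e.cost + g.cost (E := E))))
            (γ'.cost (E := E)) := by
          simp only [Deriv.cost] at hle
          rw [Multiset.cons_add] at hle
          rw [hcl]
          exact hle
        have hmlt : MLt (bl R E) (Conv.cost E (Conv.fwd hx δ)) (Conv.cost E (Conv.eqv h γ')) := by
          show MLt (bl R E) (cl E x ::ₘ δ.cost (E := E)) (cl E x ::ₘ γ'.cost (E := E))
          rw [hδcost]
          exact (mlt_glue1 hWbound hle').cons _
        obtain ⟨pp, qq, ff, ee, gg, hle2⟩ := IH _ hmlt (Conv.fwd hx δ) rfl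
        exact ⟨pp, qq, ff, ee, gg, (hle2.trans_mlt hmlt).mle⟩
  | @bwd _ t _ h γ' =>
    obtain ⟨p, q, f, e, g, hle⟩ :=
      IH (γ'.cost (E := E)) (Relation.TransGen.single (MStep.remove _ _)) γ' rfl
    cases f with
    | nil =>
      cases e with
      | nil =>
        -- fully backward valley
        refine ⟨x, x, .nil x, .nil x, g.append (.cons h (.nil x)), ?_⟩
        show MLe (bl R E) (0 + (0 + (g.append (.cons h (.nil x))).cost (E := E)))
          (cl E t ::ₘ γ'.cost (E := E))
        rw [zero_add, zero_add, Deriv.cost_append']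
        show MLe (bl R E) (g.cost (E := E) + (cl E t ::ₘ 0)) _
        rw [Multiset.add_cons, add_zero]
        refine MLe.cons _ ?_
        simp only [Deriv.cost, EChain.cost, zero_add] at hle
        exact hle
      | @cons _ e₁ _ h' e' =>
        -- cliff: x ← t ~ e₁
        obtain ⟨w₂, w₂', hw₂, hw₂', heq⟩ := hb t x e₁ h h'
        obtain ⟨dxx⟩ := deriv_of_rstar hw₂
        obtain ⟨ecw⟩ := echain_of_eqv heq
        obtain ⟨de⟩ := deriv_of_rstar hw₂'
        have hcl : cl E t = cl E e₁ := cl_eq_estep h'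
        have hxb : bl R E (cl E x) (cl E t) := bl_of_step hSE h
        have hle' : MLe (bl R E) (cl E t ::ₘ (e'.cost + g.cost (E := E)))
            (γ'.cost (E := E)) := by
          simp only [Deriv.cost, EChain.cost, zero_add] at hle
          rw [Multiset.cons_add] at hle
          exact hle
        cases de with
        | nil =>
          -- e₁ does not move: strict decrease removing two copies of cl t
          set δ : Conv S E x y :=
            (dxx.toConv).append ((ecw.toConv).append ((e'.toConv).append (g.toConvRev))) with hδ
          have hWbound : ∀ c ∈ dxx.cost (E := E) + ecw.cost, bl R E c (cl E t) := by
            refine all_mem_add (deriv_cost_below hSE dxx hxb) (echain_cost_below ecw ?_)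
            exact ble_bl_trans R E (dxx.ble_end hSE) hxb
          have hδcost : δ.cost (E := E) =
              (dxx.cost (E := E) + ecw.cost) + (e'.cost + g.cost (E := E)) := by
            rw [hδ]
            simp only [Conv.cost_append, Deriv.cost_toConv, Deriv.cost_toConvRev,
              EChain.cost_toConv]
            abel
          have hmlt : MLt (bl R E) (δ.cost (E := E)) (Conv.cost E (Conv.bwd h γ')) := by
            show MLt (bl R E) (δ.cost (E := E)) (cl E t ::ₘ γ'.cost (E := E))
            rw [hδcost]
            exact mlt_glue2 hWbound hle'
          obtain ⟨pp, qq, ff, ee, gg, hle2⟩ := IH _ hmlt δ rfl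
          exact ⟨pp, qq, ff, ee, gg, (hle2.trans_mlt hmlt).mle⟩
        | @cons _ e₂ _ he de' =>
          set δ : Conv S E x y :=
            (dxx.toConv).append ((ecw.toConv).append (((Deriv.cons he de').toConvRev).append
              ((e'.toConv).append (g.toConvRev)))) with hδ
          have he₂ : bl R E (cl E e₂) (cl E t) := hcl ▸ bl_of_step hSE he
          have hWbound : ∀ c ∈ dxx.cost (E := E) + (ecw.cost + de'.cost (E := E)),
              bl R E c (cl E t) := by
            refine all_mem_add (deriv_cost_below hSE dxx hxb) ?_
            refine all_mem_add (echain_cost_below ecw ?_) (deriv_cost_below hSE de' he₂)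
            exact ble_bl_trans R E (dxx.ble_end hSE) hxb
          have hδcost : δ.cost (E := E) =
              cl E t ::ₘ ((dxx.cost (E := E) + (ecw.cost + de'.cost (E := E))) +
                (e'.cost + g.cost (E := E))) := by
            rw [hδ]
            simp only [Conv.cost_append, Deriv.cost_toConv, Deriv.cost_toConvRev,
              EChain.cost_toConv, Deriv.cost, hcl, ← Multiset.singleton_add]
            abel
          have hmlt : MLt (bl R E) (δ.cost (E := E)) (Conv.cost E (Conv.bwd h γ')) := by
            show MLt (bl R E) (δ.cost (E := E)) (cl E t ::ₘ γ'.cost (E := E))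
            rw [hδcost]
            exact (mlt_glue1 hWbound hle').cons _
          obtain ⟨pp, qq, ff, ee, gg, hle2⟩ := IH _ hmlt δ rfl
          exact ⟨pp, qq, ff, ee, gg, (hle2.trans_mlt hmlt).mle⟩
    | @cons _ t₁ _ h₁ f' =>
      -- peak: x ← t → t₁
      obtain ⟨u₀, b₁, hE1, hR, hE2⟩ := hSE t t₁ h₁
      obtain ⟨ch⟩ := echain_of_eqv hE1
      have hc : ∀ M : Multiset (B E), (∀ c ∈ M, bl R E c (cl E t)) →
          MLt (bl R E) M (Conv.cost E (Conv.bwd h γ')) := by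
        intro M hM
        exact mlt_below_cons (γ'.cost (E := E)) hM
      obtain ⟨p₂, q₂, hxp, hbq, heq⟩ :=
        subclaim hRS hSE hterm ha hb _ (fun m' hm' => IH m' hm') ch h hR hc
      obtain ⟨dxp⟩ := deriv_of_rstar hxp
      obtain ⟨ecpq⟩ := echain_of_eqv heq
      obtain ⟨dbq⟩ := deriv_of_rstar hbq
      obtain ⟨ecbt⟩ := echain_of_eqv hE2
      set δ : Conv S E x y :=
        (dxp.toConv).append ((ecpq.toConv).append ((dbq.toConvRev).append
          ((ecbt.toConv).append ((f'.toConv).append ((e.toConv).append (g.toConvRev)))))) with hδ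
      have hxb : bl R E (cl E x) (cl E t) := bl_of_step hSE h
      have hbb : bl R E (cl E b₁) (cl E t) := by
        have h1 : bl R E (cl E b₁) (cl E u₀) := bl_of_step hSE (hRS _ _ hR)
        rwa [cl_eq_of_eqv (E := E) hE1]
      have hWbound : ∀ c ∈ dxp.cost (E := E) + (ecpq.cost + (dbq.cost (E := E) + ecbt.cost)),
          bl R E c (cl E t) := by
        refine all_mem_add (deriv_cost_below hSE dxp hxb) ?_
        refine all_mem_add (echain_cost_below ecpq ?_) ?_
        · exact ble_bl_trans R E (dxp.ble_end hSE) hxb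
        exact all_mem_add (deriv_cost_below hSE dbq hbb) (echain_cost_below ecbt hbb)
      have hle' : MLe (bl R E) (cl E t ::ₘ (f'.cost (E := E) + (e.cost + g.cost (E := E))))
          (γ'.cost (E := E)) := by
        simp only [Deriv.cost] at hle
        rw [Multiset.cons_add] at hle
        exact hle
      have hδcost : δ.cost (E := E) =
          (dxp.cost (E := E) + (ecpq.cost + (dbq.cost (E := E) + ecbt.cost))) +
            (f'.cost (E := E) + (e.cost + g.cost (E := E))) := by
        rw [hδ]
        simp only [Conv.cost_append, Deriv.cost_toConv, Deriv.cost_toConvRev,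
          EChain.cost_toConv]
        abel
      have hmlt : MLt (bl R E) (δ.cost (E := E)) (Conv.cost E (Conv.bwd h γ')) := by
        show MLt (bl R E) (δ.cost (E := E)) (cl E t ::ₘ γ'.cost (E := E))
        rw [hδcost]
        exact mlt_glue2 hWbound hle'
      obtain ⟨pp, qq, ff, ee, gg, hle2⟩ := IH _ hmlt δ rfl
      exact ⟨pp, qq, ff, ee, gg, (hle2.trans_mlt hmlt).mle⟩

end Main2

end ConfModAux
namespace ConfModAux

section Final

variable {A : Type*} {R E S : A → A → Prop}
variable (hRS : ∀ u v, R u v → S u v)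
  (hSE : ∀ u v, S u v → EREmod R E u v)
  (hterm : ¬ ∃ f : ℕ → A, ∀ n, EREmod R E (f n) (f (n + 1)))
  (ha : ∀ u a b, S u a → R u b →
    ∃ w w', RStar S a w ∧ RStar S b w' ∧ Relation.EqvGen E w w')
  (hb : ∀ u a v, S u a → (E u v ∨ E v u) →
    ∃ w w', RStar S a w ∧ RStar S v w' ∧ Relation.EqvGen E w w')

include hRS hSE hterm ha hb in
theorem main_valley : ∀ m : Multiset (B E), VProp R E S m := by
  intro m
  refine WellFounded.induction (C := VProp R E S) (mlt_wf (bl_wf R E hterm)) m (fun m ih => ?_)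
  exact main_step hRS hSE hterm ha hb m ih

include hRS hSE hterm ha hb in
theorem main_confluent : ConfluentModulo S E := by
  intro u v u' v' heq hu hv
  obtain ⟨du⟩ := deriv_of_rstar hu
  obtain ⟨ec⟩ := echain_of_eqv heq
  obtain ⟨dv⟩ := deriv_of_rstar hv
  have γ : Conv S E u' v' := (du.toConvRev).append ((ec.toConv).append (dv.toConv))
  obtain ⟨p, q, f, e, g, -⟩ := main_valley hRS hSE hterm ha hb (γ.cost (E := E)) γ rfl
  exact ⟨p, q, f.toRStar, g.toRStar, e.toEqv⟩

end Final

end ConfModAux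


/-- For a rewriting system `S` modulo `E` with `R ⊆ S ⊆ ERE` and `ERE` terminating,
confluence modulo `E`, local confluence modulo `E`, and the conjunction of conditions
(a) and (b) on local branchings with `R` and with `E` are all equivalent. -/
theorem confluenceModulo_equivalences
    {A : Type*} (R E S : A → A → Prop)
    (hRS : ∀ u v, R u v → S u v)
    (hSE : ∀ u v, S u v → EREmod R E u v)
    (hterm : ¬ ∃ f : ℕ → A, ∀ n, EREmod R E (f n) (f (n + 1))) :
    (ConfluentModulo S E ↔ LocallyConfluentModulo S E) ∧
    (LocallyConfluentModulo S E ↔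
      ((∀ u a b, S u a → R u b →
        ∃ w w', RStar S a w ∧ RStar S b w' ∧ Relation.EqvGen E w w') ∧
       (∀ u a v, S u a → (E u v ∨ E v u) →
        ∃ w w', RStar S a w ∧ RStar S v w' ∧ Relation.EqvGen E w w'))) := by
  have conf_to_lc : ConfluentModulo S E → LocallyConfluentModulo S E := by
    intro hconf
    constructor
    · intro u a b hua hub
      exact hconf u u a b (Relation.EqvGen.refl u)
        (Relation.ReflTransGen.single hua) (Relation.ReflTransGen.single hub)
    · intro u a v hua hv
      refine hconf u v a v ?_ (Relation.ReflTransGen.single hua) Relation.ReflTransGen.refl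
      exact hv.elim (Relation.EqvGen.rel _ _)
        (fun h' => Relation.EqvGen.symm _ _ (Relation.EqvGen.rel _ _ h'))
  have lc_to_ab : LocallyConfluentModulo S E →
      ((∀ u a b, S u a → R u b →
        ∃ w w', RStar S a w ∧ RStar S b w' ∧ Relation.EqvGen E w w') ∧
       (∀ u a v, S u a → (E u v ∨ E v u) →
        ∃ w w', RStar S a w ∧ RStar S v w' ∧ Relation.EqvGen E w w')) := by
    intro hlc
    exact ⟨fun u a b hua hub => hlc.1 u a b hua (hRS u b hub), hlc.2⟩
  have ab_to_conf :
      ((∀ u a b, S u a → R u b →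
        ∃ w w', RStar S a w ∧ RStar S b w' ∧ Relation.EqvGen E w w') ∧
       (∀ u a v, S u a → (E u v ∨ E v u) →
        ∃ w w', RStar S a w ∧ RStar S v w' ∧ Relation.EqvGen E w w')) →
      ConfluentModulo S E := fun hab =>
    ConfModAux.main_confluent hRS hSE hterm hab.1 hab.2
  constructor
  · exact ⟨conf_to_lc, fun hlc => ab_to_conf (lc_to_ab hlc)⟩
  · exact ⟨lc_to_ab, fun hab => conf_to_lc (ab_to_conf hab)⟩
end

section
/- Let X be a type with a well-founded strict order < and let a, b, c, d, e be words over X. If |a ++ b| ≤_mult |a| + |d| and |d ++ e| ≤_mult |a| + |d|, then |b| + |c| ≤_mult |d| + |a ++ c|. (Here a, b, c, d, e are the label words of the rewriting sequences f₁, f′₁, f₂, g₁, g′₁ in a decreasing confluence diagram modulo of the branching (f₁, e₁, g₁); the hypotheses express that this confluence diagram is decreasing.) -/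
open Classical in
/-- The lexicographic maximum measure of a word of labels: `|ε| = ∅` and
`|k·w| = {k} + |w'|`, where `w'` is obtained from `w` by deleting every letter
strictly smaller than `k`. -/
noncomputable def lmMeasure {X : Type*} [Preorder X] : List X → Multiset X
  | [] => 0
  | k :: w => {k} + lmMeasure (w.filter (fun x => decide (¬ x < k)))
termination_by w => w.length
decreasing_by
  simpa using Nat.lt_succ_of_le ((List.length_filter_le _ w.attach).trans_eq List.length_attach)

/-- The Dershowitz–Manna multiset extension of the strict order on `X`. -/
def DMLT {X : Type*} [Preorder X] (M N : Multiset X) : Prop :=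
  ∃ M₁ M₂ M₃ : Multiset X, M = M₁ + M₂ ∧ N = M₁ + M₃ ∧ M₃ ≠ 0 ∧
    ∀ x ∈ M₂, ∃ y ∈ M₃, x < y

/-- The reflexive closure of the Dershowitz–Manna multiset extension. -/
def DMLE {X : Type*} [Preorder X] (M N : Multiset X) : Prop :=
  M = N ∨ DMLT M N

section Aux
variable {X : Type*} [Preorder X]

open Classical

lemma DMLT.trans {M N P : Multiset X} (h₁ : DMLT M N) (h₂ : DMLT N P) : DMLT M P := by
  classical
  obtain ⟨M₁, M₂, M₃, hM, hN, hM₃, hdom₁⟩ := h₁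
  obtain ⟨N₁, N₂, N₃, hN', hP, hN₃, hdom₂⟩ := h₂
  have hMN : M₁ + M₃ = N₁ + N₂ := by rw [← hN, hN']
  refine ⟨M₁ ∩ N₁, M₂ + (M₁ - N₁), (N₁ - M₁) + N₃, ?_, ?_, ?_, ?_⟩
  · rw [hM]; ext x
    simp only [Multiset.count_add, Multiset.count_inter, Multiset.count_sub]
    omega
  · rw [hP]; ext x
    simp only [Multiset.count_add, Multiset.count_inter, Multiset.count_sub]
    omega
  · intro h
    have : N₃ = 0 := by
      have := congrArg Multiset.card h
      simp only [Multiset.card_add, Multiset.card_zero] at this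
      exact Multiset.card_eq_zero.mp (by omega)
    exact hN₃ this
  · intro x hx
    have hsub1 : M₁ - N₁ ≤ N₂ := by
      rw [tsub_le_iff_left]
      calc M₁ ≤ M₁ + M₃ := le_self_add
        _ = N₁ + N₂ := hMN
    have hsub2 : M₃ ≤ (N₁ - M₁) + N₂ := by
      have : M₃ = (M₁ + M₃) - M₁ := by rw [add_tsub_cancel_left]
      rw [this, hMN, tsub_le_iff_left]
      calc N₁ + N₂ ≤ (M₁ + (N₁ - M₁)) + N₂ := add_le_add le_add_tsub le_rfl
        _ = M₁ + ((N₁ - M₁) + N₂) := by rw [add_assoc]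
    rcases Multiset.mem_add.mp hx with hx | hx
    · obtain ⟨y, hy, hxy⟩ := hdom₁ x hx
      rcases Multiset.mem_add.mp (Multiset.mem_of_le hsub2 hy) with hy' | hy'
      · exact ⟨y, Multiset.mem_add.mpr (Or.inl hy'), hxy⟩
      · obtain ⟨z, hz, hyz⟩ := hdom₂ y hy'
        exact ⟨z, Multiset.mem_add.mpr (Or.inr hz), lt_trans hxy hyz⟩
    · obtain ⟨y, hy, hxy⟩ := hdom₂ x (Multiset.mem_of_le hsub1 hx)
      exact ⟨y, Multiset.mem_add.mpr (Or.inr hy), hxy⟩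

lemma DMLE.trans {M N P : Multiset X} (h₁ : DMLE M N) (h₂ : DMLE N P) : DMLE M P := by
  rcases h₁ with rfl | h₁
  · exact h₂
  rcases h₂ with rfl | h₂
  · exact Or.inr h₁
  exact Or.inr (h₁.trans h₂)

lemma DMLE.add_right {M N : Multiset X} (K : Multiset X) (h : DMLE M N) :
    DMLE (M + K) (N + K) := by
  rcases h with rfl | ⟨M₁, M₂, M₃, hM, hN, hM₃, hdom⟩
  · exact Or.inl rfl
  exact Or.inr ⟨M₁ + K, M₂, M₃, by rw [hM]; abel, by rw [hN]; abel, hM₃, hdom⟩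

lemma dmle_of_dom {M S A : Multiset X} (h : ∀ x ∈ S, ∃ y ∈ A, x < y) :
    DMLE (M + S) (M + A) := by
  by_cases hA : A = 0
  · subst hA
    have : S = 0 := by
      rw [Multiset.eq_zero_iff_forall_notMem]
      intro x hx
      obtain ⟨y, hy, -⟩ := h x hx
      simp at hy
    rw [this]
    exact Or.inl rfl
  · exact Or.inr ⟨M, S, A, rfl, rfl, hA, h⟩

/-- Drop lemma: filtering by `¬ · < k` only removes letters `< k` from the measure. -/
lemma lm_drop : ∀ (n : ℕ) (v : List X), v.length ≤ n → ∀ (k : X),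
    ∃ T, lmMeasure v = lmMeasure (v.filter (fun x => decide (¬ x < k))) + T ∧
      ∀ x ∈ T, x < k := by
  intro n
  induction n with
  | zero =>
    intro v hv k
    rw [Nat.le_zero, List.length_eq_zero_iff] at hv
    subst hv
    exact ⟨0, by simp, by simp⟩
  | succ n ih =>
    intro v hv k
    match v with
    | [] => exact ⟨0, by simp, by simp⟩
    | j :: v' =>
      have hlen : v'.length ≤ n := by simpa using hv
      by_cases hjk : j < k
      · -- j is dropped
        have hfil : (j :: v').filter (fun x => decide (¬ x < k))
            = v'.filter (fun x => decide (¬ x < k)) := by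
          simp [hjk]
        obtain ⟨T', hT', hT'k⟩ := ih (v'.filter (fun x => decide (¬ x < j)))
          (le_trans (List.length_filter_le _ _) hlen) k
        have hcomp : (v'.filter (fun x => decide (¬ x < j))).filter
            (fun x => decide (¬ x < k)) = v'.filter (fun x => decide (¬ x < k)) := by
          rw [List.filter_filter]
          apply List.filter_congr
          intro x _
          by_cases hxk : x < k
          · simp [hxk]
          · have hxj : ¬ x < j := fun hxj => hxk (lt_trans hxj hjk)
            simp [hxk, hxj]
        refine ⟨T' + {j}, ?_, ?_⟩
        · rw [lmMeasure.eq_2, hfil, hT', hcomp]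
          abel
        · intro x hx
          rcases Multiset.mem_add.mp hx with hx | hx
          · exact hT'k x hx
          · rw [Multiset.mem_singleton] at hx; subst hx; exact hjk
      · -- j is kept
        have hfil : (j :: v').filter (fun x => decide (¬ x < k))
            = j :: v'.filter (fun x => decide (¬ x < k)) := by
          simp [hjk]
        obtain ⟨T, hT, hTk⟩ := ih (v'.filter (fun x => decide (¬ x < j)))
          (le_trans (List.length_filter_le _ _) hlen) k
        have hcomm : (v'.filter (fun x => decide (¬ x < j))).filter
            (fun x => decide (¬ x < k))
            = (v'.filter (fun x => decide (¬ x < k))).filter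
              (fun x => decide (¬ x < j)) := by
          rw [List.filter_filter, List.filter_filter]
          apply List.filter_congr
          intro x _
          rw [Bool.and_comm]
        refine ⟨T, ?_, hTk⟩
        rw [lmMeasure.eq_2, hfil, lmMeasure.eq_2, hT, hcomm]
        abel

/-- Split lemma for the measure of a concatenation. -/
lemma lm_split : ∀ (n : ℕ) (u : List X), u.length ≤ n → ∀ (v : List X),
    ∃ R S, lmMeasure (u ++ v) = lmMeasure u + R ∧ lmMeasure v = R + S ∧
      ∀ x ∈ S, ∃ y ∈ lmMeasure u, x < y := by
  intro n
  induction n with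
  | zero =>
    intro u hu v
    rw [Nat.le_zero, List.length_eq_zero_iff] at hu
    subst hu
    exact ⟨lmMeasure v, 0, by simp [lmMeasure.eq_1], by simp, by simp⟩
  | succ n ih =>
    intro u hu v
    match u with
    | [] => exact ⟨lmMeasure v, 0, by simp [lmMeasure.eq_1], by simp, by simp⟩
    | k :: u' =>
      have hlen : u'.length ≤ n := by simpa using hu
      obtain ⟨R, S, h1, h2, h3⟩ := ih (u'.filter (fun x => decide (¬ x < k)))
        (le_trans (List.length_filter_le _ _) hlen)
        (v.filter (fun x => decide (¬ x < k)))
      obtain ⟨T, hT, hTk⟩ := lm_drop v.length v le_rfl k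
      refine ⟨R, S + T, ?_, ?_, ?_⟩
      · rw [show (k :: u') ++ v = k :: (u' ++ v) from rfl, lmMeasure.eq_2,
          List.filter_append, h1, lmMeasure.eq_2]
        abel
      · rw [hT, h2]; abel
      · intro x hx
        rcases Multiset.mem_add.mp hx with hx | hx
        · obtain ⟨y, hy, hxy⟩ := h3 x hx
          refine ⟨y, ?_, hxy⟩
          rw [lmMeasure.eq_2]
          exact Multiset.mem_add.mpr (Or.inr hy)
        · refine ⟨k, ?_, hTk x hx⟩
          rw [lmMeasure.eq_2]
          simp

end Aux

/-- Pasting property for label words of a decreasing confluence diagram modulo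
(Lemma 2.3.7): if `|a ++ b| ≤_mult |a| + |d|` and `|d ++ e| ≤_mult |a| + |d|`,
then `|b| + |c| ≤_mult |d| + |a ++ c|`. -/
theorem pasting_property_one
    {X : Type*} [Preorder X]
    (hwf : WellFounded ((· < ·) : X → X → Prop))
    (a b c d e : List X)
    (h1 : DMLE (lmMeasure (a ++ b)) (lmMeasure a + lmMeasure d))
    (h2 : DMLE (lmMeasure (d ++ e)) (lmMeasure a + lmMeasure d)) :
    DMLE (lmMeasure b + lmMeasure c) (lmMeasure d + lmMeasure (a ++ c)) := by
  obtain ⟨B, B₂, hab, hb, hB₂⟩ := lm_split a.length a le_rfl b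
  obtain ⟨C, C₂, hac, hc, hC₂⟩ := lm_split a.length a le_rfl c
  have step1 : DMLE (lmMeasure b + lmMeasure c) ((B + C) + lmMeasure a) := by
    rw [hb, hc, show B + B₂ + (C + C₂) = (B + C) + (B₂ + C₂) by abel]
    refine dmle_of_dom fun x hx => ?_
    rcases Multiset.mem_add.mp hx with h | h
    exacts [hB₂ x h, hC₂ x h]
  have step2 : DMLE ((B + C) + lmMeasure a) (lmMeasure d + lmMeasure (a ++ c)) := by
    have h1' := h1.add_right C
    have e1 : (B + C) + lmMeasure a = lmMeasure (a ++ b) + C := by rw [hab]; abel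
    have e2 : (lmMeasure a + lmMeasure d) + C = lmMeasure d + lmMeasure (a ++ c) := by
      rw [hac]; abel
    rw [e1, ← e2]
    exact h1'
  exact step1.trans step2
end

section
/- Let X be a type with a well-founded strict order < and let a, b, c, p, q, r, s be words over X. Assume: (a) |q ++ r| ≤_mult |a| + |q| and |a ++ p| ≤_mult |a| + |q|; (b) |p ++ s| ≤_mult |p| + |b| and |b ++ c| ≤_mult |p| + |b|. Then |q ++ r ++ s| ≤_mult |a ++ b| + |q| and |a ++ b ++ c| ≤_mult |a ++ b| + |q|. (Here a, b, c, p, q, r, s are the label words of the rewriting sequences f₁, f₂, h, f′₁, g₁, g′₁, g₂ in a pasting of two decreasing confluence diagrams modulo; hypotheses (a) and (b) express that the confluences of the branchings (f₁, e₁, g₁) and (f′₁, f₂) are decreasing.) -/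
namespace PastingAux
open Classical
variable {X : Type*} [Preorder X]

lemma lm_nil : lmMeasure ([] : List X) = 0 := by simp [lmMeasure]

lemma lm_cons (k : X) (w : List X) :
    lmMeasure (k :: w) = {k} + lmMeasure (w.filter (fun x => decide (¬ x < k))) := by
  rw [lmMeasure]

/-- letters of the measure are letters of the word -/
lemma mem_lm : ∀ (n : ℕ) (w : List X), w.length ≤ n → ∀ x ∈ lmMeasure w, x ∈ w := by
  intro n
  induction n with
  | zero =>
    intro w hw x hx
    rw [List.length_eq_zero_iff.mp (Nat.le_zero.mp hw)] at hx
    simp [lm_nil] at hx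
  | succ n ih =>
    intro w hw x hx
    match w with
    | [] => simp [lm_nil] at hx
    | k :: w' =>
      rw [lm_cons] at hx
      rcases Multiset.mem_add.mp hx with h | h
      · simp at h; simp [h]
      · have hlen : (w'.filter (fun x => decide (¬ x < k))).length ≤ n :=
          le_trans (List.length_filter_le _ _) (Nat.succ_le_succ_iff.mp hw)
        have := ih _ hlen x h
        exact List.mem_cons_of_mem _ (List.mem_of_mem_filter this)

lemma mem_lm' {w : List X} {x : X} (hx : x ∈ lmMeasure w) : x ∈ w :=
  mem_lm w.length w le_rfl x hx

/-- filtering by a predicate whose complement is down-closed commutes with the measure -/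
lemma lm_filter : ∀ (n : ℕ) (w : List X), w.length ≤ n →
    ∀ (p : X → Bool), (∀ ⦃x m : X⦄, x < m → p m = false → p x = false) →
    lmMeasure (w.filter p) = (lmMeasure w).filter (fun x => p x = true) := by
  intro n
  induction n with
  | zero =>
    intro w hw p hp
    rw [List.length_eq_zero_iff.mp (Nat.le_zero.mp hw)]
    simp [lm_nil]
  | succ n ih =>
    intro w hw p hp
    match w with
    | [] => simp [lm_nil]
    | k :: w' =>
      have hw' : w'.length ≤ n := Nat.succ_le_succ_iff.mp hw
      have hfl : ∀ (q : X → Bool), (w'.filter q).length ≤ n :=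
        fun q => le_trans (List.length_filter_le _ _) hw'
      cases hpk : p k with
      | true =>
        rw [List.filter_cons_of_pos (by simp [hpk]), lm_cons, lm_cons,
          List.filter_filter]
        have hswap : w'.filter (fun a => decide (¬ a < k) && p a) =
            (w'.filter (fun x => decide (¬ x < k))).filter p := by
          rw [List.filter_filter]
          exact List.filter_congr (fun x _ => Bool.and_comm _ _) |>.symm
        rw [hswap, ih _ (hfl _) p hp, Multiset.filter_add,
          Multiset.filter_singleton, if_pos (by simp [hpk])]
      | false =>
        have hlist : w'.filter p = (w'.filter (fun x => decide (¬ x < k))).filter p := by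
          rw [List.filter_filter]
          refine (List.filter_congr (fun x _ => ?_))
          cases hpx : p x with
          | false => simp
          | true =>
            have : ¬ x < k := fun hlt => by
              have := hp hlt hpk; rw [hpx] at this; exact Bool.noConfusion this
            simp [this, hpx]
        rw [List.filter_cons_of_neg (by simp [hpk]), lm_cons, Multiset.filter_add,
          Multiset.filter_singleton, if_neg (by simp [hpk]), hlist,
          ih _ (hfl _) p hp]
        simp

lemma lm_filter' {w : List X} {p : X → Bool}
    (hp : ∀ ⦃x m : X⦄, x < m → p m = false → p x = false) :
    lmMeasure (w.filter p) = (lmMeasure w).filter (fun x => p x = true) :=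
  lm_filter w.length w le_rfl p hp

/-- Boolean predicate: not smaller than any letter of `u` -/
noncomputable def pW (u : List X) : X → Bool := fun x => decide (∀ y ∈ u, ¬ x < y)

lemma pW_spec (u : List X) (x : X) : pW u x = true ↔ ∀ y ∈ u, ¬ x < y := by
  simp [pW]

lemma pW_false (u : List X) (x : X) : pW u x = false ↔ ∃ y ∈ u, x < y := by
  simp [pW]

lemma pW_down {u : List X} : ∀ ⦃x m : X⦄, x < m → pW u m = false → pW u x = false := by
  intro x m hlt hm
  rcases (pW_false u m).mp hm with ⟨y, hy, hmy⟩
  exact (pW_false u x).mpr ⟨y, hy, lt_trans hlt hmy⟩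

/-- `discard u M` removes from `M` the elements smaller than some letter of `u`. -/
noncomputable def discard (u : List X) (M : Multiset X) : Multiset X :=
  M.filter (fun x => pW u x = true)

lemma mem_discard {u : List X} {M : Multiset X} {x : X} :
    x ∈ discard u M ↔ x ∈ M ∧ ∀ y ∈ u, ¬ x < y := by
  simp [discard, pW]

lemma discard_add (u : List X) (M N : Multiset X) :
    discard u (M + N) = discard u M + discard u N := Multiset.filter_add _ _ _

lemma discard_le (u : List X) (M : Multiset X) : discard u M ≤ M := Multiset.filter_le _ _

lemma discard_discard (u v : List X) (M : Multiset X) :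
    discard u (discard v M) = discard (u ++ v) M := by
  rw [discard, discard, discard, Multiset.filter_filter]
  refine Multiset.filter_congr (fun x _ => ?_)
  simp [pW, List.mem_append, or_imp, forall_and]

lemma lm_append : ∀ (n : ℕ) (u : List X), u.length ≤ n → ∀ (v : List X),
    lmMeasure (u ++ v) = lmMeasure u + discard u (lmMeasure v) := by
  intro n
  induction n with
  | zero =>
    intro u hu v
    rw [List.length_eq_zero_iff.mp (Nat.le_zero.mp hu)]
    simp only [List.nil_append, lm_nil, zero_add, discard]
    exact (Multiset.filter_eq_self.mpr (fun x _ => by simp [pW])).symm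
  | succ n ih =>
    intro u hu v
    match u with
    | [] =>
      simp only [List.nil_append, lm_nil, zero_add, discard]
      exact (Multiset.filter_eq_self.mpr (fun x _ => by simp [pW])).symm
    | k :: u' =>
      have hu' : u'.length ≤ n := Nat.succ_le_succ_iff.mp hu
      have hfl : (u'.filter (fun x => decide (¬ x < k))).length ≤ n :=
        le_trans (List.length_filter_le _ _) hu'
      rw [List.cons_append, lm_cons, List.filter_append, ih _ hfl,
        lm_cons k u', add_assoc]
      congr 1
      congr 1
      have hd : ∀ ⦃x m : X⦄, x < m → (fun x => decide (¬ x < k)) m = false →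
          (fun x => decide (¬ x < k)) x = false := by
        intro x m hlt hm
        simp only [decide_eq_false_iff_not, not_not] at hm ⊢
        exact lt_trans hlt hm
      rw [show lmMeasure (v.filter (fun x => decide (¬ x < k))) =
          (lmMeasure v).filter (fun x => (fun x => decide (¬ x < k)) x = true) from
          lm_filter' hd, discard, discard, Multiset.filter_filter]
      refine Multiset.filter_congr (fun x _ => ?_)
      simp only [pW, decide_eq_true_eq, List.mem_cons, List.mem_filter,
        decide_eq_true_eq]
      constructor
      · rintro ⟨h1, h2⟩ y (rfl | hy)
        · exact h2
        · intro hxy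
          by_cases hyk : y < k
          · exact absurd (lt_trans hxy hyk) h2
          · exact h1 y ⟨hy, by simpa using hyk⟩ hxy
      · rintro h
        refine ⟨fun y hy => h y (Or.inr hy.1), h k (Or.inl rfl)⟩

lemma lm_append' (u v : List X) :
    lmMeasure (u ++ v) = lmMeasure u + discard u (lmMeasure v) :=
  lm_append u.length u le_rfl v

/-- any letter dominated by a letter of `u` is dominated by an element of `|u|`. -/
lemma exists_lm_gt : ∀ (n : ℕ) (u : List X), u.length ≤ n →
    ∀ {x y : X}, y ∈ u → x < y → ∃ z ∈ lmMeasure u, x < z := by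
  intro n
  induction n with
  | zero =>
    intro u hu x y hy
    rw [List.length_eq_zero_iff.mp (Nat.le_zero.mp hu)] at hy
    simp at hy
  | succ n ih =>
    intro u hu x y hy hxy
    match u with
    | [] => simp at hy
    | k :: u' =>
      have hu' : u'.length ≤ n := Nat.succ_le_succ_iff.mp hu
      have hfl : (u'.filter (fun x => decide (¬ x < k))).length ≤ n :=
        le_trans (List.length_filter_le _ _) hu'
      rcases List.mem_cons.mp hy with rfl | hy'
      · exact ⟨y, by simp [lm_cons], hxy⟩
      · by_cases hyk : y < k
        · exact ⟨k, by simp [lm_cons], lt_trans hxy hyk⟩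
        · have hmem : y ∈ u'.filter (fun x => decide (¬ x < k)) := by
            simp [List.mem_filter, hy', hyk]
          obtain ⟨z, hz, hxz⟩ := ih _ hfl hmem hxy
          exact ⟨z, by rw [lm_cons]; exact Multiset.mem_add.mpr (Or.inr hz), hxz⟩

lemma exists_lm_gt' {u : List X} {x y : X} (hy : y ∈ u) (hxy : x < y) :
    ∃ z ∈ lmMeasure u, x < z :=
  exists_lm_gt u.length u le_rfl hy hxy

/-! ### DMLE machinery -/

/-- build `DMLE` from a decomposition that allows empty parts. -/
lemma dmle_of_parts {M N M₁ M₂ M₃ : Multiset X} (h1 : M = M₁ + M₂) (h2 : N = M₁ + M₃)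
    (hdom : ∀ x ∈ M₂, ∃ y ∈ M₃, x < y) : DMLE M N := by
  rcases Multiset.empty_or_exists_mem M₂ with h | ⟨x, hx⟩
  · subst h
    rcases Multiset.empty_or_exists_mem M₃ with h3 | ⟨y, hy⟩
    · subst h3; left; rw [h1, h2]
    · right
      exact ⟨M₁, 0, M₃, h1, h2, fun h0 => by simp [h0] at hy, by simp⟩
  · obtain ⟨y, hy, _⟩ := hdom x hx
    exact Or.inr ⟨M₁, M₂, M₃, h1, h2, fun h0 => by simp [h0] at hy, hdom⟩

/-- extract a (possibly degenerate) decomposition from `DMLE`. -/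
lemma dmle_parts {M N : Multiset X} (h : DMLE M N) :
    ∃ M₁ M₂ M₃ : Multiset X, M = M₁ + M₂ ∧ N = M₁ + M₃ ∧ ∀ x ∈ M₂, ∃ y ∈ M₃, x < y := by
  rcases h with rfl | ⟨M₁, M₂, M₃, h1, h2, _, hdom⟩
  · exact ⟨M, 0, 0, by simp, by simp, by simp⟩
  · exact ⟨M₁, M₂, M₃, h1, h2, hdom⟩

/-- every element of the smaller multiset is equal to or below an element of the bigger. -/
lemma dmle_mem {M N : Multiset X} (h : DMLE M N) {x : X} (hx : x ∈ M) :
    ∃ y ∈ N, x = y ∨ x < y := by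
  obtain ⟨M₁, M₂, M₃, h1, h2, hdom⟩ := dmle_parts h
  subst h1; subst h2
  rcases Multiset.mem_add.mp hx with h | h
  · exact ⟨x, Multiset.mem_add.mpr (Or.inl h), Or.inl rfl⟩
  · obtain ⟨y, hy, hxy⟩ := hdom x h
    exact ⟨y, Multiset.mem_add.mpr (Or.inr hy), Or.inr hxy⟩

/-- in a nonempty finset of a preorder there is a maximal element. -/
lemma finset_exists_max : ∀ s : Finset X, s.Nonempty → ∃ y ∈ s, ∀ z ∈ s, ¬ y < z := by
  intro s
  induction s using Finset.induction_on with
  | empty => rintro ⟨x, hx⟩; simp at hx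
  | @insert a s' ha ih =>
    intro _
    rcases s'.eq_empty_or_nonempty with rfl | hne
    · exact ⟨a, by simp, by simp⟩
    · obtain ⟨y, hy, hmax⟩ := ih hne
      by_cases hya : y < a
      · refine ⟨a, Finset.mem_insert_self _ _, ?_⟩
        intro z hz haz
        rcases Finset.mem_insert.mp hz with rfl | hz'
        · exact lt_irrefl _ haz
        · exact hmax z hz' (lt_trans hya haz)
      · refine ⟨y, Finset.mem_insert_of_mem hy, ?_⟩
        intro z hz hyz
        rcases Finset.mem_insert.mp hz with rfl | hz'
        · exact hya hyz
        · exact hmax z hz' hyz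

/-- the count-based characterization of `DMLE`. -/
def MulLE (M N : Multiset X) : Prop :=
  ∀ x, N.count x < M.count x → ∃ y, x < y ∧ M.count y < N.count y

lemma dmle_iff {M N : Multiset X} : DMLE M N ↔ MulLE M N := by
  constructor
  · intro h
    obtain ⟨M₁, M₂, M₃, h1, h2, hdom⟩ := dmle_parts h
    subst h1; subst h2
    intro x hx
    simp only [Multiset.count_add] at hx
    have hx2 : M₃.count x < M₂.count x := by omega
    have hxM₂ : x ∈ M₂ := by
      rw [← Multiset.count_pos]; omega
    obtain ⟨y₀, hy₀, hxy₀⟩ := hdom x hxM₂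
    have hSne : (M₃.toFinset.filter (fun y => x < y)).Nonempty :=
      ⟨y₀, Finset.mem_filter.mpr ⟨Multiset.mem_toFinset.mpr hy₀, hxy₀⟩⟩
    obtain ⟨y, hy, hmax⟩ := finset_exists_max _ hSne
    rw [Finset.mem_filter, Multiset.mem_toFinset] at hy
    by_cases hcnt : M₂.count y < M₃.count y
    · exact ⟨y, hy.2, by simp only [Multiset.count_add]; omega⟩
    · exfalso
      have hyM₂ : y ∈ M₂ := by
        rw [← Multiset.count_pos]
        have := Multiset.count_pos.mpr hy.1; omega
      obtain ⟨z, hz, hyz⟩ := hdom y hyM₂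
      exact hmax z (Finset.mem_filter.mpr ⟨Multiset.mem_toFinset.mpr hz,
        lt_trans hy.2 hyz⟩) hyz
  · intro h
    have hM : M = M ∩ N + (M - N) := by
      ext x
      simp only [Multiset.count_add, Multiset.count_inter, Multiset.count_sub]
      omega
    have hN : N = M ∩ N + (N - M) := by
      ext x
      simp only [Multiset.count_add, Multiset.count_inter, Multiset.count_sub]
      omega
    refine dmle_of_parts hM hN ?_
    intro x hx
    have hcnt : N.count x < M.count x := by
      have := Multiset.count_pos.mpr hx
      rw [Multiset.count_sub] at this; omega
    obtain ⟨y, hxy, hy⟩ := h x hcnt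
    refine ⟨y, ?_, hxy⟩
    rw [← Multiset.count_pos, Multiset.count_sub]
    omega

lemma dmle_refl (M : Multiset X) : DMLE M M := Or.inl rfl

lemma dmle_trans {M N P : Multiset X} (h1 : DMLE M N) (h2 : DMLE N P) : DMLE M P := by
  rw [dmle_iff] at *
  intro x hx
  have hcase : N.count x < M.count x ∨ P.count x < N.count x := by omega
  have hSne : ∃ y ∈ (M + N + P).toFinset.filter
      (fun y => x < y ∧ (M.count y < N.count y ∨ N.count y < P.count y)), True := by
    rcases hcase with hc | hc
    · obtain ⟨y, hxy, hy⟩ := h1 x hc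
      refine ⟨y, Finset.mem_filter.mpr ⟨Multiset.mem_toFinset.mpr ?_, hxy, Or.inl hy⟩, trivial⟩
      exact Multiset.mem_add.mpr (Or.inl (Multiset.mem_add.mpr (Or.inr (Multiset.count_pos.mp (by omega)))))
    · obtain ⟨y, hxy, hy⟩ := h2 x hc
      refine ⟨y, Finset.mem_filter.mpr ⟨Multiset.mem_toFinset.mpr ?_, hxy, Or.inr hy⟩, trivial⟩
      exact Multiset.mem_add.mpr (Or.inr (Multiset.count_pos.mp (by omega)))
  obtain ⟨y₀, hy₀, -⟩ := hSne
  obtain ⟨y, hy, hmax⟩ := finset_exists_max _ ⟨y₀, hy₀⟩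
  rw [Finset.mem_filter] at hy
  obtain ⟨-, hxy, hycase⟩ := hy
  refine ⟨y, hxy, ?_⟩
  by_contra hcon
  push_neg at hcon
  rcases hycase with hc | hc
  · have hc2 : P.count y < N.count y := by omega
    obtain ⟨z, hyz, hz⟩ := h2 y hc2
    refine hmax z (Finset.mem_filter.mpr ⟨Multiset.mem_toFinset.mpr ?_,
      lt_trans hxy hyz, Or.inr hz⟩) hyz
    exact Multiset.mem_add.mpr (Or.inr (Multiset.count_pos.mp (by omega)))
  · have hc2 : N.count y < M.count y := by omega
    obtain ⟨z, hyz, hz⟩ := h1 y hc2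
    refine hmax z (Finset.mem_filter.mpr ⟨Multiset.mem_toFinset.mpr ?_,
      lt_trans hxy hyz, Or.inl hz⟩) hyz
    exact Multiset.mem_add.mpr (Or.inl (Multiset.mem_add.mpr (Or.inr (Multiset.count_pos.mp (by omega)))))

lemma dmle_cancel {K M N : Multiset X} (h : DMLE (K + M) (K + N)) : DMLE M N := by
  rw [dmle_iff] at *
  intro x hx
  have := h x (by simp only [Multiset.count_add]; omega)
  obtain ⟨y, hxy, hy⟩ := this
  simp only [Multiset.count_add] at hy
  exact ⟨y, hxy, by omega⟩

lemma dmle_add_left (K : Multiset X) {M N : Multiset X} (h : DMLE M N) :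
    DMLE (K + M) (K + N) := by
  rw [dmle_iff] at *
  intro x hx
  simp only [Multiset.count_add] at hx
  obtain ⟨y, hxy, hy⟩ := h x (by omega)
  exact ⟨y, hxy, by simp only [Multiset.count_add]; omega⟩

lemma dmle_add_right (K : Multiset X) {M N : Multiset X} (h : DMLE M N) :
    DMLE (M + K) (N + K) := by
  rw [add_comm M K, add_comm N K]; exact dmle_add_left K h

lemma dmle_of_le {M N : Multiset X} (h : M ≤ N) : DMLE M N := by
  rw [dmle_iff]
  intro x hx
  exact absurd (Multiset.le_iff_count.mp h x) (by omega)

/-- `DMLE` is compatible with `discard`. -/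
lemma dmle_discard (u : List X) {M N : Multiset X} (h : DMLE M N) :
    DMLE (discard u M) (discard u N) := by
  obtain ⟨M₁, M₂, M₃, h1, h2, hdom⟩ := dmle_parts h
  subst h1; subst h2
  rw [discard_add, discard_add]
  refine dmle_of_parts rfl rfl ?_
  intro x hx
  rw [mem_discard] at hx
  obtain ⟨y, hy, hxy⟩ := hdom x hx.1
  refine ⟨y, ?_, hxy⟩
  rw [mem_discard]
  refine ⟨hy, fun z hz hyz => hx.2 z hz (lt_trans hxy hyz)⟩

lemma discard_split (u : List X) (M : Multiset X) :
    discard u M + M.filter (fun x => ¬ pW u x = true) = M :=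
  Multiset.filter_add_not _ M

end PastingAux

open PastingAux

/-- Pasting property for label words of two pasted decreasing confluence diagrams
modulo (Lemma 2.3.8): from the decreasingness inequalities (a) and (b), we get
`|q ++ r ++ s| ≤_mult |a ++ b| + |q|` and `|a ++ b ++ c| ≤_mult |a ++ b| + |q|`. -/
theorem pasting_property_two
    {X : Type*} [Preorder X]
    (hwf : WellFounded ((· < ·) : X → X → Prop))
    (a b c p q r s : List X)
    (ha1 : DMLE (lmMeasure (q ++ r)) (lmMeasure a + lmMeasure q))
    (ha2 : DMLE (lmMeasure (a ++ p)) (lmMeasure a + lmMeasure q))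
    (hb1 : DMLE (lmMeasure (p ++ s)) (lmMeasure p + lmMeasure b))
    (hb2 : DMLE (lmMeasure (b ++ c)) (lmMeasure p + lmMeasure b)) :
    DMLE (lmMeasure (q ++ r ++ s)) (lmMeasure (a ++ b) + lmMeasure q) ∧
    DMLE (lmMeasure (a ++ b ++ c)) (lmMeasure (a ++ b) + lmMeasure q) := by
  classical
  have eqQRS : lmMeasure (q ++ r ++ s)
      = lmMeasure (q ++ r) + discard (q ++ r) (lmMeasure s) := lm_append' _ _
  have eqAB : lmMeasure (a ++ b) = lmMeasure a + discard a (lmMeasure b) := lm_append' _ _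
  have eqABC : lmMeasure (a ++ b ++ c)
      = lmMeasure (a ++ b) + discard (a ++ b) (lmMeasure c) := lm_append' _ _
  have eqAP : lmMeasure (a ++ p) = lmMeasure a + discard a (lmMeasure p) := lm_append' _ _
  have eqPS : lmMeasure (p ++ s) = lmMeasure p + discard p (lmMeasure s) := lm_append' _ _
  have eqBC : lmMeasure (b ++ c) = lmMeasure b + discard b (lmMeasure c) := lm_append' _ _
  -- Goal 2
  have hbc' : DMLE (discard a (lmMeasure b) + discard (a ++ b) (lmMeasure c))
      (discard a (lmMeasure p) + discard a (lmMeasure b)) := by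
    have h := dmle_discard a hb2
    rw [eqBC, discard_add, discard_add, discard_discard] at h
    exact h
  have goal2 : DMLE (lmMeasure (a ++ b ++ c)) (lmMeasure (a ++ b) + lmMeasure q) := by
    rw [eqABC, eqAB]
    have step1 : DMLE
        (lmMeasure a + (discard a (lmMeasure b) + discard (a ++ b) (lmMeasure c)))
        (lmMeasure a + (discard a (lmMeasure p) + discard a (lmMeasure b))) :=
      dmle_add_left _ hbc'
    have step2 : DMLE
        ((lmMeasure a + discard a (lmMeasure p)) + discard a (lmMeasure b))
        ((lmMeasure a + lmMeasure q) + discard a (lmMeasure b)) := by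
      refine dmle_add_right _ ?_
      rw [← eqAP]; exact ha2
    rw [add_assoc (lmMeasure a) (discard a (lmMeasure p))] at step2
    have h := dmle_trans step1 step2
    rw [← add_assoc, add_right_comm (lmMeasure a) (lmMeasure q)] at h
    exact h
  -- Goal 1
  have hps' : DMLE (discard a (lmMeasure p) + discard (a ++ p) (lmMeasure s))
      (discard a (lmMeasure p) + discard a (lmMeasure b)) := by
    have h := dmle_discard a hb1
    rw [eqPS, discard_add, discard_add, discard_discard] at h
    exact h
  have hS1B : DMLE (discard (a ++ p) (lmMeasure s)) (discard a (lmMeasure b)) :=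
    dmle_cancel hps'
  obtain ⟨M₁, M₂, M₃, hm1, hm2, hdom1⟩ := dmle_parts ha1
  obtain ⟨K₁, K₂, K₃, hk1, hk2, hdom2⟩ := dmle_parts hS1B
  have hSsplit := discard_split (a ++ p) (discard (q ++ r) (lmMeasure s))
  have hS0le : discard (a ++ p) (discard (q ++ r) (lmMeasure s))
      ≤ discard (a ++ p) (lmMeasure s) :=
    Multiset.filter_le_filter _ (discard_le _ _)
  have hS0K : discard (a ++ p) (discard (q ++ r) (lmMeasure s)) ≤ K₁ + K₂ := by
    rw [← hk1]; exact hS0le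
  have hL1le : discard (a ++ p) (discard (q ++ r) (lmMeasure s)) ∩ K₁ ≤ K₁ :=
    Multiset.inter_le_right
  have hLsplit : discard (a ++ p) (discard (q ++ r) (lmMeasure s)) ∩ K₁
      + (discard (a ++ p) (discard (q ++ r) (lmMeasure s)) - K₁)
      = discard (a ++ p) (discard (q ++ r) (lmMeasure s)) := by
    ext x
    simp only [Multiset.count_add, Multiset.count_inter, Multiset.count_sub]
    omega
  have hL2le : discard (a ++ p) (discard (q ++ r) (lmMeasure s)) - K₁ ≤ K₂ := by
    rw [Multiset.le_iff_count]
    intro x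
    have h := Multiset.le_iff_count.mp hS0K x
    simp only [Multiset.count_add] at h
    simp only [Multiset.count_sub]
    omega
  have hE : ∀ x ∈ (discard (q ++ r) (lmMeasure s)).filter
      (fun x => ¬ pW (a ++ p) x = true), ∃ v ∈ M₃, x < v := by
    intro x hx
    rw [Multiset.mem_filter] at hx
    obtain ⟨hxS, hxnp⟩ := hx
    obtain ⟨hxs, hqr⟩ := mem_discard.mp hxS
    obtain ⟨y, hy, hxy⟩ := (pW_false _ _).mp (by
      cases h : pW (a ++ p) x
      · rfl
      · exact absurd h hxnp)
    obtain ⟨z, hz, hxz⟩ := exists_lm_gt' hy hxy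
    obtain ⟨v, hv, hzv⟩ := dmle_mem ha2 hz
    have hxv : x < v := by
      rcases hzv with rfl | h
      · exact hxz
      · exact lt_trans hxz h
    rcases Multiset.mem_add.mp hv with hvA | hvQ
    · have hvnotM1 : v ∉ M₁ := by
        intro hvM1
        have hvqr : v ∈ lmMeasure (q ++ r) := by
          rw [hm1]; exact Multiset.mem_add.mpr (Or.inl hvM1)
        exact hqr v (mem_lm' hvqr) hxv
      have hv' : v ∈ M₁ + M₃ := by
        rw [← hm2]; exact Multiset.mem_add.mpr (Or.inl hvA)
      rcases Multiset.mem_add.mp hv' with h | h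
      · exact absurd h hvnotM1
      · exact ⟨v, h, hxv⟩
    · exact absurd hxv (hqr v (List.mem_append.mpr (Or.inl (mem_lm' hvQ))))
  have goal1 : DMLE (lmMeasure (q ++ r ++ s)) (lmMeasure (a ++ b) + lmMeasure q) := by
    have eqL : lmMeasure (q ++ r ++ s)
        = (M₁ + discard (a ++ p) (discard (q ++ r) (lmMeasure s)) ∩ K₁)
          + (M₂ + ((discard (a ++ p) (discard (q ++ r) (lmMeasure s)) - K₁)
            + (discard (q ++ r) (lmMeasure s)).filter (fun x => ¬ pW (a ++ p) x = true))) := by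
      rw [eqQRS, hm1]
      ext x
      have h1 := congrArg (Multiset.count x) hSsplit
      have h2 := congrArg (Multiset.count x) hLsplit
      simp only [Multiset.count_add, Multiset.count_inter, Multiset.count_sub] at h1 h2 ⊢
      omega
    have eqR : lmMeasure (a ++ b) + lmMeasure q
        = (M₁ + discard (a ++ p) (discard (q ++ r) (lmMeasure s)) ∩ K₁)
          + (M₃ + ((K₁ - discard (a ++ p) (discard (q ++ r) (lmMeasure s)) ∩ K₁) + K₃)) := by
      rw [eqAB]
      ext x
      have h1 := congrArg (Multiset.count x) hm2
      have h2 := congrArg (Multiset.count x) hk2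
      have h3 := Multiset.le_iff_count.mp hL1le x
      simp only [Multiset.count_add, Multiset.count_inter, Multiset.count_sub] at h1 h2 h3 ⊢
      omega
    refine dmle_of_parts eqL eqR ?_
    intro x hx
    rcases Multiset.mem_add.mp hx with hxM₂ | hx'
    · obtain ⟨y, hy, hxy⟩ := hdom1 x hxM₂
      exact ⟨y, Multiset.mem_add.mpr (Or.inl hy), hxy⟩
    · rcases Multiset.mem_add.mp hx' with hxL | hxE
      · obtain ⟨y, hy, hxy⟩ := hdom2 x (Multiset.mem_of_le hL2le hxL)
        exact ⟨y, Multiset.mem_add.mpr (Or.inr (Multiset.mem_add.mpr (Or.inr hy))), hxy⟩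
      · obtain ⟨v, hv, hxv⟩ := hE x hxE
        exact ⟨v, Multiset.mem_add.mpr (Or.inl hv), hxv⟩
  exact ⟨goal1, goal2⟩
end

section
/- Let → be a binary relation on a type A that is quasi-terminating: every infinite sequence (u_n) with u_n → u_{n+1} for all n contains some element occurring infinitely often. Then every element of A reduces by →* to a quasi-normal form, i.e. for every u there exists v with u →* v such that for every w with v → w one has w →* v. -/
/-- A relation `r` is quasi-terminating if every infinite rewriting sequence
contains some element occurring infinitely often. -/
def QuasiTerminating {A : Type*} (r : A → A → Prop) : Prop :=
  ∀ f : ℕ → A, (∀ n, r (f n) (f (n + 1))) → ∃ a, ∀ N, ∃ n, N ≤ n ∧ f n = a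

/-- An element `v` is a quasi-normal form for `r` if every one-step reduct of `v`
reduces back to `v`. -/
def QuasiNormalForm {A : Type*} (r : A → A → Prop) (v : A) : Prop :=
  ∀ w, r v w → Relation.ReflTransGen r w v

/-- Every element of a quasi-terminating rewriting system reduces to a
quasi-normal form. -/
theorem exists_quasiNormalForm_of_quasiTerminating
    {A : Type*} (r : A → A → Prop) (hqt : QuasiTerminating r) :
    ∀ u, ∃ v, Relation.ReflTransGen r u v ∧ QuasiNormalForm r v := by
  intro u
  by_contra h
  push_neg at h
  have key : ∀ s : {v : A // Relation.ReflTransGen r u v},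
      ∃ t : {v : A // Relation.ReflTransGen r u v},
        r s.1 t.1 ∧ ¬ Relation.ReflTransGen r t.1 s.1 := by
    rintro ⟨v, hv⟩
    have hv' := h v hv
    unfold QuasiNormalForm at hv'
    push_neg at hv'
    obtain ⟨w, hw1, hw2⟩ := hv'
    exact ⟨⟨w, hv.tail hw1⟩, hw1, hw2⟩
  choose step hstep1 hstep2 using key
  set f : ℕ → {v : A // Relation.ReflTransGen r u v} :=
    fun n => step^[n] ⟨u, Relation.ReflTransGen.refl⟩ with hfdef
  have hsucc : ∀ n, f (n + 1) = step (f n) := by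
    intro n
    simp [hfdef, Function.iterate_succ_apply']
  have hf : ∀ n, r (f n).1 (f (n + 1)).1 := by
    intro n
    rw [hsucc]
    exact hstep1 (f n)
  obtain ⟨a, ha⟩ := hqt (fun n => (f n).1) hf
  obtain ⟨n, -, hn⟩ := ha 0
  obtain ⟨m, hm, hm'⟩ := ha (n + 1)
  have chain : ∀ k l, k ≤ l → Relation.ReflTransGen r (f k).1 (f l).1 := by
    intro k l hkl
    induction l, hkl using Nat.le_induction with
    | base => exact Relation.ReflTransGen.refl
    | succ l _ ih => exact ih.tail (hf l)
  have hback : Relation.ReflTransGen r (f (n + 1)).1 (f n).1 := by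
    have hc := chain (n + 1) m hm
    have : (f m).1 = (f n).1 := hm'.trans hn.symm
    rwa [this] at hc
  rw [hsucc] at hback
  exact hstep2 (f n) hback
end
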